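/- arXiv:1904.08914 — 3 statements merged into one kernel-verified Lean document; each statement's English description precedes it below -/
import Mathlib

section
/- Let p be a real polynomial with |p(x)| ≤ 1 for all x ∈ [-1,1]. Then for all real x with 1 ≤ x ≤ 1 + μ (μ ≥ 0), we have |p(x)| ≤ exp(2·deg(p)·√(2μ + μ²)). -/
open Polynomial Real Finset

private lemma natDegree_T_le : ∀ n : ℕ, (Polynomial.Chebyshev.T ℝ (n : ℤ)).natDegree ≤ n := by
  intro n
  induction n using Nat.strong_induction_on with
  | _ n ih =>
    match n with
    | 0 => simp
    | 1 => simp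
    | (m+2) =>
      have h1 := ih (m+1) (by omega)
      have h2 := ih m (by omega)
      have hc : ((m+2 : ℕ) : ℤ) = (m : ℤ) + 2 := by push_cast; ring
      rw [hc, Polynomial.Chebyshev.T_add_two]
      refine le_trans (natDegree_sub_le _ _) ?_
      have hX : (2 * X * Polynomial.Chebyshev.T ℝ ((m:ℤ) + 1)).natDegree ≤ m + 2 := by
        refine le_trans (natDegree_mul_le) ?_
        have h2X : (2 * X : ℝ[X]).natDegree ≤ 1 :=
          le_trans natDegree_mul_le (by simp)
        have : ((m+1 : ℕ) : ℤ) = (m : ℤ) + 1 := by push_cast; ring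
        rw [this] at h1
        omega
      have hT : (Polynomial.Chebyshev.T ℝ (m:ℤ)).natDegree ≤ m + 2 := by omega
      omega

private lemma T_eval_formula (x : ℝ) (hx : 1 ≤ x) (n : ℕ) :
    (Polynomial.Chebyshev.T ℝ (n : ℤ)).eval x
      = ((x + Real.sqrt (x^2-1))^n + (x + Real.sqrt (x^2-1))⁻¹^n) / 2 := by
  have hs0 : 0 ≤ Real.sqrt (x^2-1) := Real.sqrt_nonneg _
  have hs2 : Real.sqrt (x^2-1)^2 = x^2 - 1 := Real.sq_sqrt (by nlinarith)
  set s : ℝ := Real.sqrt (x^2-1) with hsdef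
  set y : ℝ := x + s with hydef
  have hy1 : 1 ≤ y := by nlinarith
  have hy0 : y ≠ 0 := by nlinarith
  have hinv : y⁻¹ = x - s := inv_eq_of_mul_eq_one_right (by nlinarith)
  have h2x : 2 * x = y + y⁻¹ := by rw [hinv]; ring
  have hyy : y * y⁻¹ = 1 := mul_inv_cancel₀ hy0
  induction n using Nat.strong_induction_on with
  | _ n ih =>
    match n with
    | 0 => simp
    | 1 => simp; linarith [h2x]
    | (m+2) =>
      have h1 := ih (m+1) (by omega)
      have h2 := ih m (by omega)
      have hc : ((m+2 : ℕ) : ℤ) = (m : ℤ) + 2 := by push_cast; ring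
      have hc1 : ((m+1 : ℕ) : ℤ) = (m : ℤ) + 1 := by push_cast; ring
      rw [hc1] at h1
      rw [hc, Polynomial.Chebyshev.T_add_two]
      simp only [eval_sub, eval_mul, eval_ofNat, eval_X, h1, h2]
      linear_combination ((y^(m+1) + y⁻¹^(m+1))/2) * h2x + ((y^m + y⁻¹^m)/2) * hyy

/-- Paturi's lemma: if `|p(x)| ≤ 1` on `[-1,1]`, then for `1 ≤ x ≤ 1 + μ`,
`|p(x)| ≤ exp(2 deg(p) √(2μ + μ²))`. -/
theorem paturi_growth_bound (p : Polynomial ℝ)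
    (hb : ∀ x ∈ Set.Icc (-1 : ℝ) 1, |p.eval x| ≤ 1)
    (μ : ℝ) (hμ : 0 ≤ μ) (x : ℝ) (hx1 : 1 ≤ x) (hx2 : x ≤ 1 + μ) :
    |p.eval x| ≤ Real.exp (2 * (p.natDegree : ℝ) * Real.sqrt (2 * μ + μ ^ 2)) := by
  set n := p.natDegree with hn
  by_cases hn0 : n = 0
  · have hp := Polynomial.eq_C_of_natDegree_eq_zero hn0
    have h1 : p.eval x = p.eval 1 := by rw [hp]; simp
    rw [h1]
    refine le_trans (hb 1 (by norm_num)) (Real.one_le_exp ?_)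
    positivity
  -- main case
  have hn1 : 1 ≤ n := Nat.one_le_iff_ne_zero.2 hn0
  have hnR : 0 < (n : ℝ) := by positivity
  have hpi := Real.pi_pos
  set v : ℕ → ℝ := fun k => Real.cos (k * π / n) with hv
  set S : Finset ℕ := Finset.range (n+1) with hS
  have hmem : ∀ k : ℕ, k ≤ n → (k : ℝ) * π / n ∈ Set.Icc 0 π := by
    intro k hk
    constructor
    · positivity
    · rw [div_le_iff₀ hnR]
      have hkr : (k : ℝ) ≤ n := by exact_mod_cast hk
      nlinarith
  have hmemS : ∀ k ∈ S, k ≤ n := by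
    intro k hk
    exact Nat.lt_succ_iff.mp (Finset.mem_range.mp hk)
  have hvs : Set.InjOn v S := by
    intro a ha b hb' hab
    have h1 : (a : ℝ) * π / n = (b : ℝ) * π / n :=
      Real.injOn_cos (hmem a (hmemS a ha)) (hmem b (hmemS b hb')) hab
    rw [mul_div_assoc, mul_div_assoc] at h1
    have h2 : (a : ℝ) = b := mul_right_cancel₀ (by positivity) h1
    exact_mod_cast h2
  have hanti : ∀ j k : ℕ, k ≤ n → j < k → v k < v j := by
    intro j k hk hjk
    refine Real.strictAntiOn_cos (hmem j (le_trans hjk.le hk)) (hmem k hk) ?_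
    rw [mul_div_assoc, mul_div_assoc]
    exact mul_lt_mul_of_pos_right (by exact_mod_cast hjk) (by positivity)
  have hv1 : ∀ j : ℕ, v j ≤ 1 := fun j => Real.cos_le_one _
  have hvm1 : ∀ j : ℕ, -1 ≤ v j := fun j => Real.neg_one_le_cos _
  -- p equals its Lagrange interpolation
  have hdeg : p.degree < #S := by
    rw [hS, Finset.card_range]
    refine lt_of_le_of_lt Polynomial.degree_le_natDegree ?_
    exact_mod_cast Nat.lt_succ_self n
  have hpeq := Lagrange.eq_interpolate hvs hdeg
  have hpx : p.eval x = ∑ i ∈ S, p.eval (v i) * (Lagrange.basis S v i).eval x := by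
    conv_lhs => rw [hpeq]
    rw [Lagrange.interpolate_apply, Polynomial.eval_finset_sum]
    exact Finset.sum_congr rfl (fun i _ => by rw [eval_mul, eval_C])
  -- sign of basis polynomials at x
  have hsign : ∀ k ∈ S, 0 ≤ (-1 : ℝ)^k * (Lagrange.basis S v k).eval x := by
    intro k hk
    have hkn : k ≤ n := hmemS k hk
    have heval : (Lagrange.basis S v k).eval x
        = ∏ j ∈ S.erase k, ((v k - v j)⁻¹ * (x - v j)) := by
      simp [Lagrange.basis, Lagrange.basisDivisor, Polynomial.eval_prod]
    rw [heval]
    set f : ℕ → ℝ := fun j => (v k - v j)⁻¹ * (x - v j) with hf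
    have hsplit := Finset.prod_filter_mul_prod_filter_not (S.erase k) (· < k) f
    have hfil : (S.erase k).filter (· < k) = Finset.range k := by
      ext j
      simp only [Finset.mem_filter, Finset.mem_erase, hS, Finset.mem_range]
      omega
    rw [← hsplit, hfil]
    have hC : 0 ≤ (-1 : ℝ)^k * ∏ j ∈ Finset.range k, f j := by
      have hB : ∏ j ∈ Finset.range k, (-f j)
          = (-1 : ℝ)^k * ∏ j ∈ Finset.range k, f j := by
        calc ∏ j ∈ Finset.range k, (-f j)
            = ∏ j ∈ Finset.range k, ((-1 : ℝ) * f j) := by simp only [neg_one_mul]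
          _ = (∏ _j ∈ Finset.range k, (-1 : ℝ)) * ∏ j ∈ Finset.range k, f j :=
              Finset.prod_mul_distrib
          _ = (-1 : ℝ)^k * ∏ j ∈ Finset.range k, f j := by
              rw [Finset.prod_const, Finset.card_range]
      rw [← hB]
      refine Finset.prod_nonneg (fun j hj => ?_)
      have hjk : j < k := Finset.mem_range.mp hj
      have h1 : v k < v j := hanti j k hkn hjk
      have h2 : 0 ≤ x - v j := by have := hv1 j; linarith
      have h3 : (v k - v j)⁻¹ ≤ 0 := inv_nonpos.mpr (by linarith)
      have : f j ≤ 0 := mul_nonpos_of_nonpos_of_nonneg h3 h2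
      linarith
    have hpos : 0 ≤ ∏ j ∈ (S.erase k).filter (fun j => ¬ j < k), f j := by
      refine Finset.prod_nonneg (fun j hj => ?_)
      simp only [Finset.mem_filter, Finset.mem_erase, hS, Finset.mem_range] at hj
      have hkj : k < j := by omega
      have hjn : j ≤ n := by omega
      have h1 : v j < v k := hanti k j hjn hkj
      have h2 : 0 ≤ x - v j := by have := hv1 j; linarith
      have h3 : 0 ≤ (v k - v j)⁻¹ := inv_nonneg.mpr (by linarith)
      exact mul_nonneg h3 h2
    rw [← mul_assoc]
    exact mul_nonneg hC hpos
  -- bound by alternating sum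
  have habs : |p.eval x| ≤ ∑ i ∈ S, (-1 : ℝ)^i * (Lagrange.basis S v i).eval x := by
    rw [hpx]
    refine le_trans (Finset.abs_sum_le_sum_abs _ _) (Finset.sum_le_sum fun i hi => ?_)
    rw [abs_mul]
    have hbasis : |(Lagrange.basis S v i).eval x|
        = (-1 : ℝ)^i * (Lagrange.basis S v i).eval x := by
      have h1 : |(-1 : ℝ)^i| = 1 := by simp
      calc |(Lagrange.basis S v i).eval x|
          = |(-1 : ℝ)^i * (Lagrange.basis S v i).eval x| := by rw [abs_mul, h1, one_mul]
        _ = (-1 : ℝ)^i * (Lagrange.basis S v i).eval x := abs_of_nonneg (hsign i hi)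
    rw [← hbasis]
    have hple : |p.eval (v i)| ≤ 1 := hb (v i) ⟨hvm1 i, hv1 i⟩
    exact mul_le_of_le_one_left (abs_nonneg _) hple
  -- alternating sum equals Chebyshev polynomial evaluated at x
  have hT : ∑ i ∈ S, (-1 : ℝ)^i * (Lagrange.basis S v i).eval x
      = (Polynomial.Chebyshev.T ℝ (n : ℤ)).eval x := by
    have hdegT : (Polynomial.Chebyshev.T ℝ (n : ℤ)).degree < #S := by
      rw [hS, Finset.card_range]
      refine lt_of_le_of_lt Polynomial.degree_le_natDegree ?_
      exact_mod_cast Nat.lt_succ_of_le (natDegree_T_le n)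
    have hTeq := Lagrange.eq_interpolate (f := Polynomial.Chebyshev.T ℝ (n : ℤ)) hvs hdegT
    have hvals : ∀ i : ℕ, (Polynomial.Chebyshev.T ℝ (n : ℤ)).eval (v i) = (-1 : ℝ)^i := by
      intro i
      show (Polynomial.Chebyshev.T ℝ (n : ℤ)).eval (Real.cos ((i : ℝ) * π / n)) = _
      rw [Polynomial.Chebyshev.T_real_cos]
      have harg : ((n : ℤ) : ℝ) * ((i : ℝ) * π / n) = (i : ℝ) * π := by
        push_cast
        field_simp
      rw [harg]
      simpa using Real.cos_add_nat_mul_pi 0 i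
    conv_rhs => rw [hTeq]
    rw [Lagrange.interpolate_apply, Polynomial.eval_finset_sum]
    exact Finset.sum_congr rfl (fun i _ => by rw [eval_mul, eval_C, hvals i])
  -- final estimate
  have hform := T_eval_formula x hx1 n
  have hsq0 : 0 ≤ Real.sqrt (2 * μ + μ ^ 2) := Real.sqrt_nonneg _
  set sμ : ℝ := Real.sqrt (2 * μ + μ ^ 2) with hsμ
  have hxs : Real.sqrt (x^2 - 1) ≤ sμ := Real.sqrt_le_sqrt (by nlinarith)
  have hs0 : 0 ≤ Real.sqrt (x^2 - 1) := Real.sqrt_nonneg _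
  set y : ℝ := x + Real.sqrt (x^2 - 1) with hy
  have hμs : μ ≤ sμ := by
    have h1 : μ = Real.sqrt (μ^2) := (Real.sqrt_sq hμ).symm
    rw [h1, hsμ]
    exact Real.sqrt_le_sqrt (by nlinarith)
  have hy1 : 1 ≤ y := by rw [hy]; linarith
  have hy0 : 0 ≤ y := by linarith
  have hexp : y ≤ Real.exp (2 * sμ) := by
    have h1 : y ≤ 1 + 2 * sμ := by rw [hy]; linarith
    have h2 := Real.add_one_le_exp (2 * sμ)
    linarith
  have hyinv : y⁻¹^n ≤ y^n := by
    refine pow_le_pow_left₀ (inv_nonneg.mpr hy0) ?_ n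
    exact le_trans (inv_le_one_of_one_le₀ hy1) hy1
  calc |p.eval x| ≤ ∑ i ∈ S, (-1 : ℝ)^i * (Lagrange.basis S v i).eval x := habs
    _ = (Polynomial.Chebyshev.T ℝ (n : ℤ)).eval x := hT
    _ = (y^n + y⁻¹^n) / 2 := hform
    _ ≤ y^n := by linarith
    _ ≤ (Real.exp (2 * sμ))^n := pow_le_pow_left₀ hy0 hexp n
    _ = Real.exp ((n : ℝ) * (2 * sμ)) := (Real.exp_nat_mul _ n).symm
    _ = Real.exp (2 * (n : ℝ) * sμ) := by ring_nf
end

section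
/- Let p be a real polynomial of degree at most √k, and let 0 = z₁ < z₂ < ... < z_M = k be points with z_{i+1} - z_i ≤ 1 for all i. If max_{x,y ∈ [0,k]} |p(x) - p(y)| ≥ H, then max_{i,j} |p(z_i) - p(z_j)| ≥ H/2. -/
open Polynomial Set Real

namespace EZaux

lemma natDegree_T_le (n : ℕ) : (Chebyshev.T ℝ n).natDegree ≤ n := by
  induction n using Nat.strong_induction_on with
  | _ n ih =>
    match n with
    | 0 => simp [Chebyshev.T_zero]
    | 1 => simp [Chebyshev.T_one]
    | (m+2) =>
      have h0 := ih m (by omega)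
      have h1 := ih (m+1) (by omega)
      have hc : ((m+2:ℕ) : ℤ) = (m:ℤ) + 2 := by push_cast; ring
      rw [hc, Chebyshev.T_add_two]
      refine le_trans (natDegree_sub_le _ _) (max_le ?_ ?_)
      · refine le_trans (natDegree_mul_le) ?_
        have h3 : (2 * X : ℝ[X]).natDegree ≤ 1 :=
          le_trans (natDegree_mul_le) (by simp)
        have h4 : (Chebyshev.T ℝ ((m:ℤ)+1)).natDegree ≤ m + 1 := by
          have hc1 : ((m+1:ℕ) : ℤ) = (m:ℤ) + 1 := by push_cast; ring
          rw [← hc1]; exact h1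
        omega
      · omega

lemma U_eval_one (n : ℕ) : (Chebyshev.U ℝ n).eval 1 = (n:ℝ) + 1 := by
  induction n using Nat.strong_induction_on with
  | _ n ih =>
    match n with
    | 0 => simp [Chebyshev.U_zero]
    | 1 => rw [Nat.cast_one, Chebyshev.U_one]; simp; norm_num
    | (m+2) =>
      have h0 := ih m (by omega)
      have h1 := ih (m+1) (by omega)
      have hc : ((m+2:ℕ) : ℤ) = (m:ℤ) + 2 := by push_cast; ring
      have hc1 : ((m+1:ℕ) : ℤ) = (m:ℤ) + 1 := by push_cast; ring
      rw [hc, Chebyshev.U_add_two]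
      rw [hc1] at h1
      simp only [eval_sub, eval_mul, eval_ofNat, eval_X, h0, h1]
      push_cast
      ring

lemma U_deriv_one (n : ℕ) :
    3 * (derivative (Chebyshev.U ℝ n)).eval 1 = (n:ℝ)*((n:ℝ)+1)*((n:ℝ)+2) := by
  induction n using Nat.strong_induction_on with
  | _ n ih =>
    match n with
    | 0 => simp [Chebyshev.U_zero]
    | 1 =>
      rw [Nat.cast_one, Chebyshev.U_one]
      simp only [derivative_mul, derivative_ofNat, derivative_X, zero_mul, mul_one, zero_add,
        eval_ofNat]
      norm_num
    | (m+2) =>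
      have h0 := ih m (by omega)
      have h1 := ih (m+1) (by omega)
      have e1 : (Chebyshev.U ℝ ((m:ℤ)+1)).eval 1 = (m:ℝ) + 2 := by
        have := U_eval_one (m+1)
        have hc1 : ((m+1:ℕ) : ℤ) = (m:ℤ) + 1 := by push_cast; ring
        rw [hc1] at this
        rw [this]; push_cast; ring
      have hc : ((m+2:ℕ) : ℤ) = (m:ℤ) + 2 := by push_cast; ring
      have hc1 : ((m+1:ℕ) : ℤ) = (m:ℤ) + 1 := by push_cast; ring
      rw [hc, Chebyshev.U_add_two]
      rw [hc1] at h1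
      simp only [derivative_sub, derivative_mul, derivative_ofNat, derivative_X, zero_mul,
        zero_add, mul_one, eval_sub, eval_add, eval_mul, eval_ofNat, eval_X, e1]
      push_cast at h0 h1 ⊢
      nlinarith [h0, h1]

lemma T_eval_one (n : ℕ) : (Chebyshev.T ℝ n).eval 1 = 1 := by
  have h := Polynomial.Chebyshev.T_real_cos 0 (n:ℤ)
  simpa using h

lemma T_deriv_one (n : ℕ) : (derivative (Chebyshev.T ℝ n)).eval 1 = (n:ℝ)^2 := by
  cases n with
  | zero => simp [Chebyshev.T_zero]
  | succ m =>
    have h := Chebyshev.T_derivative_eq_U (R := ℝ) ((m:ℤ)+1)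
    have h2 : ((m:ℤ)+1-1) = (m:ℤ) := by ring
    rw [h2] at h
    have hc : ((m+1:ℕ) : ℤ) = (m:ℤ) + 1 := by push_cast; ring
    rw [hc, h]
    simp only [eval_mul, eval_intCast, U_eval_one m]
    push_cast
    ring

lemma T_deriv2_one (n : ℕ) :
    3 * (derivative (derivative (Chebyshev.T ℝ n))).eval 1 = (n:ℝ)^2*((n:ℝ)^2-1) := by
  cases n with
  | zero => simp [Chebyshev.T_zero]
  | succ m =>
    have h := Chebyshev.T_derivative_eq_U (R := ℝ) ((m:ℤ)+1)
    have h2 : ((m:ℤ)+1-1) = (m:ℤ) := by ring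
    rw [h2] at h
    have hc : ((m+1:ℕ) : ℤ) = (m:ℤ) + 1 := by push_cast; ring
    rw [hc, h, derivative_mul]
    have hd : derivative (((m:ℤ)+1 : ℤ) : ℝ[X]) = 0 := by simp
    rw [hd]
    simp only [zero_mul, zero_add, eval_mul, eval_intCast]
    have := U_deriv_one m
    push_cast
    nlinarith [this]


lemma root_between {g : ℝ[X]} {a b : ℝ} (hab : a < b) (hs : g.eval a * g.eval b < 0) :
    ∃ w ∈ Ioo a b, g.eval w = 0 := by
  rcases lt_trichotomy (g.eval a) 0 with h | h | h
  · have hb : 0 < g.eval b := by nlinarith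
    obtain ⟨w, hw, hw0⟩ := intermediate_value_Ioo (le_of_lt hab)
      (g.continuousOn) (Set.mem_Ioo.mpr ⟨h, hb⟩)
    exact ⟨w, hw, hw0⟩
  · rw [h] at hs; simp at hs
  · have hb : g.eval b < 0 := by nlinarith
    obtain ⟨w, hw, hw0⟩ := intermediate_value_Ioo' (le_of_lt hab)
      (g.continuousOn) (Set.mem_Ioo.mpr ⟨hb, h⟩)
    exact ⟨w, hw, hw0⟩

lemma chain_anti {f : ℕ → ℝ} {n : ℕ} (h : ∀ i, i+1 < n → f (i+1) < f i) :
    ∀ i j, i < j → j < n → f j < f i := by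
  intro i j hij hjn
  induction j with
  | zero => omega
  | succ j ihj =>
    rcases Nat.lt_or_ge i j with h' | h'
    · exact lt_trans (h j (by omega)) (ihj h' (by omega))
    · have hij' : i = j := by omega
      subst hij'
      exact h i (by omega)

lemma poly_eq_zero_of_roots {g : ℝ[X]} {m : ℕ} (hdeg : g.natDegree ≤ m)
    (v : ℕ → ℝ) (hchain : ∀ i, i+1 < m → v (i+1) < v i)
    (hroot : ∀ j, j < m → g.eval (v j) = 0)
    (hlt : ∀ j, j < m → v j < 1) (h1 : g.eval 1 = 0) : g = 0 := by
  by_contra hg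
  set S : Finset ℝ := (Finset.range m).image v ∪ {1} with hSdef
  have hSsub : S ⊆ g.roots.toFinset := by
    intro x hx
    rw [hSdef, Finset.mem_union] at hx
    rw [Multiset.mem_toFinset, mem_roots']
    rcases hx with hx | hx
    · obtain ⟨j, hj, rfl⟩ := Finset.mem_image.mp hx
      exact ⟨hg, hroot j (Finset.mem_range.mp hj)⟩
    · rw [Finset.mem_singleton] at hx
      subst hx
      exact ⟨hg, h1⟩
  have hinj : Set.InjOn v (Finset.range m) := by
    intro a ha b hb hab
    by_contra hne
    simp only [Finset.coe_range, Set.mem_Iio] at ha hb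
    rcases Nat.lt_or_ge a b with h' | h'
    · exact absurd hab (ne_of_gt (chain_anti hchain a b h' hb))
    · have h'' : b < a := by omega
      exact absurd hab (ne_of_lt (chain_anti hchain b a h'' ha))
  have hcard : S.card = m + 1 := by
    rw [hSdef, Finset.card_union_of_disjoint, Finset.card_image_of_injOn hinj]
    · simp
    · rw [Finset.disjoint_singleton_right]
      intro hmem
      obtain ⟨j, hj, hj1⟩ := Finset.mem_image.mp hmem
      exact absurd hj1 (ne_of_lt (hlt j (Finset.mem_range.mp hj)))
  have hle : S.card ≤ g.natDegree :=
    le_trans (Finset.card_le_card hSsub)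
      (le_trans (Multiset.toFinset_card_le _) (Polynomial.card_roots' g))
  omega


lemma markov_endpoint_one {n : ℕ} {q : ℝ[X]} (hd : q.natDegree ≤ n) {B : ℝ}
    (hB : ∀ x ∈ Icc (-1:ℝ) 1, |q.eval x| ≤ B) :
    (derivative q).eval 1 ≤ (n:ℝ)^2 * B := by
  have hB0 : 0 ≤ B := le_trans (abs_nonneg _) (hB 1 ⟨by norm_num, le_rfl⟩)
  rcases Nat.eq_zero_or_pos n with rfl | hn
  · have h0 : q.natDegree = 0 := le_antisymm hd (Nat.zero_le _)
    obtain ⟨a, rfl⟩ := Polynomial.natDegree_eq_zero.mp h0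
    simp
  by_contra hcon
  push_neg at hcon
  set D := (derivative q).eval 1 with hDdef
  have hD : 0 < D := lt_of_le_of_lt (by positivity) hcon
  set μ := (n:ℝ)^2 / D with hμdef
  have hn' : (0:ℝ) < (n:ℝ) := by exact_mod_cast hn
  have hμ0 : 0 < μ := by positivity
  have hμB : μ * B < 1 := by
    rw [hμdef, div_mul_eq_mul_div, div_lt_one hD]
    linarith [hcon]
  set h : ℝ[X] := Chebyshev.T ℝ n - C μ * q with hhdef
  set η : ℕ → ℝ := fun j => Real.cos (j * π / n) with hηdef
  have hηmem : ∀ j : ℕ, η j ∈ Icc (-1:ℝ) 1 := fun j => ⟨Real.neg_one_le_cos _, Real.cos_le_one _⟩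
  have hηanti : ∀ i j : ℕ, i < j → j ≤ n → η j < η i := by
    intro i j hij hjn
    have hjr : (j:ℝ) ≤ (n:ℝ) := by exact_mod_cast hjn
    have hir : (i:ℝ) < (j:ℝ) := by exact_mod_cast hij
    apply Real.strictAntiOn_cos
    · constructor
      · positivity
      · rw [div_le_iff₀ hn']
        nlinarith [pi_pos]
    · constructor
      · positivity
      · rw [div_le_iff₀ hn']
        nlinarith [pi_pos]
    · rw [div_lt_div_iff₀ hn' hn']
      nlinarith [mul_pos (mul_pos (sub_pos.mpr hir) pi_pos) hn']
  have hη0 : η 0 = 1 := by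
    rw [hηdef]; simp
  have hTval : ∀ j : ℕ, (Chebyshev.T ℝ n).eval (η j) = (-1)^j := by
    intro j
    have h1 := Polynomial.Chebyshev.T_real_cos ((j:ℝ) * π / n) (n:ℤ)
    have h2 : ((n:ℤ):ℝ) * ((j:ℝ) * π / n) = (j:ℝ) * π := by
      push_cast
      field_simp
    rw [h2] at h1
    have h3 : Real.cos ((j:ℝ) * π) = (-1)^j := by
      have := Real.cos_nat_mul_pi_sub 0 j
      simpa using this
    rw [hηdef]
    simpa [h3] using h1
  have hq : ∀ j : ℕ, |q.eval (η j)| ≤ B := fun j => hB _ (hηmem j)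
  have hsign : ∀ j : ℕ, 0 < (-1:ℝ)^j * h.eval (η j) := by
    intro j
    rw [hhdef]
    simp only [eval_sub, eval_mul, eval_C, hTval j]
    have habs := abs_le.mp (hq j)
    rcases Nat.even_or_odd j with he | ho
    · rw [he.neg_one_pow]
      nlinarith [mul_le_mul_of_nonneg_left habs.2 hμ0.le, hμB]
    · rw [ho.neg_one_pow]
      nlinarith [mul_le_mul_of_nonneg_left habs.1 hμ0.le, hμB]
  have hex : ∀ j : ℕ, ∃ w : ℝ, j < n → w ∈ Ioo (η (j+1)) (η j) ∧ h.eval w = 0 := by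
    intro j
    by_cases hj : j < n
    · have hs1 := hsign j
      have hs2 := hsign (j+1)
      have hprod : h.eval (η (j+1)) * h.eval (η j) < 0 := by
        have hmul := mul_pos hs1 hs2
        have hpow : ((-1:ℝ)^j * h.eval (η j)) * ((-1:ℝ)^(j+1) * h.eval (η (j+1)))
            = -(h.eval (η (j+1)) * h.eval (η j)) := by
          have : (-1:ℝ)^(j+1) = -(-1:ℝ)^j := by rw [pow_succ]; ring
          have h2 : ((-1:ℝ)^j)^2 = 1 := by
            rcases Nat.even_or_odd j with he | ho
            · rw [he.neg_one_pow]; norm_num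
            · rw [ho.neg_one_pow]; norm_num
          rw [this]
          linear_combination (-(h.eval (η j) * h.eval (η (j+1)))) * h2
        nlinarith [mul_pos hs1 hs2, hpow]
      obtain ⟨w, hw, hw0⟩ := root_between (hηanti j (j+1) (by omega) (by omega)) hprod
      exact ⟨w, fun _ => ⟨hw, hw0⟩⟩
    · exact ⟨0, fun hc => absurd hc hj⟩
  choose w hw using hex
  have hrolle : ∀ j : ℕ, ∃ v : ℝ, j+1 < n → v ∈ Ioo (w (j+1)) (w j) ∧ (derivative h).eval v = 0 := by
    intro j
    by_cases hj : j+1 < n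
    · have hlt : w (j+1) < w j := by
        have a1 := ((hw (j+1)) hj).1.2
        have a2 := ((hw j) (by omega)).1.1
        linarith
      obtain ⟨c, hc, hc0⟩ := exists_deriv_eq_zero hlt h.continuousOn
          (by rw [((hw (j+1)) hj).2, ((hw j) (by omega)).2])
      refine ⟨c, fun _ => ⟨hc, ?_⟩⟩
      rwa [Polynomial.deriv] at hc0
    · exact ⟨0, fun hc => absurd hc hj⟩
  choose v hv using hrolle
  have hd1 : (derivative h).eval 1 = 0 := by
    rw [hhdef]
    rw [derivative_sub, derivative_C_mul]
    simp only [eval_sub, eval_mul, eval_C]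
    rw [T_deriv_one n, ← hDdef, hμdef]
    field_simp
    ring
  by_cases hzero : derivative h = 0
  · have hc0 : h.natDegree = 0 := natDegree_eq_zero_of_derivative_eq_zero hzero
    obtain ⟨a, ha⟩ := Polynomial.natDegree_eq_zero.mp hc0
    have e0 := hsign 0
    have e1 := hsign 1
    rw [← ha] at e0 e1
    simp at e0 e1
    linarith
  · have hdegh : h.natDegree ≤ n := by
      rw [hhdef]
      exact le_trans (natDegree_sub_le _ _)
        (max_le (natDegree_T_le n) (le_trans (natDegree_C_mul_le _ _) hd))
    have hdegh' : (derivative h).natDegree ≤ n - 1 := by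
      have := Polynomial.natDegree_derivative_le h
      omega
    have hwlt : ∀ j, j < n → w j < 1 := by
      intro j hj
      have h1 : w j < η j := ((hw j) hj).1.2
      rcases Nat.eq_zero_or_pos j with rfl | hjpos
      · rwa [hη0] at h1
      · have : η j < η 0 := hηanti 0 j hjpos (le_of_lt hj)
        rw [hη0] at this
        linarith
    have hvchain : ∀ i, i+1 < n-1 → v (i+1) < v i := by
      intro i hi
      have a1 := ((hv (i+1)) (by omega)).1.2
      have a2 := ((hv i) (by omega)).1.1
      linarith
    have hvroot : ∀ j, j < n-1 → (derivative h).eval (v j) = 0 :=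
      fun j hj => ((hv j) (by omega)).2
    have hvlt : ∀ j, j < n-1 → v j < 1 := by
      intro j hj
      have a1 := ((hv j) (by omega)).1.2
      exact lt_trans a1 (hwlt j (by omega))
    exact hzero (poly_eq_zero_of_roots hdegh' v hvchain hvroot hvlt hd1)


lemma T_eval_node {n : ℕ} (hn : 0 < n) (j : ℕ) :
    (Chebyshev.T ℝ n).eval (Real.cos ((j:ℝ) * π / n)) = (-1)^j := by
  have hn' : (0:ℝ) < (n:ℝ) := by exact_mod_cast hn
  have h1 := Polynomial.Chebyshev.T_real_cos ((j:ℝ) * π / n) (n:ℤ)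
  have h2 : ((n:ℤ):ℝ) * ((j:ℝ) * π / n) = (j:ℝ) * π := by
    push_cast
    field_simp
  rw [h2] at h1
  have h3 : Real.cos ((j:ℝ) * π) = (-1)^j := by
    have := Real.cos_nat_mul_pi_sub 0 j
    simpa using this
  rw [h1, h3]

lemma alt_rolle {n : ℕ} (hn : 0 < n) (h : ℝ[X])
    (hsign : ∀ j : ℕ, 0 < (-1:ℝ)^j * h.eval (Real.cos ((j:ℝ) * π / n))) :
    ∃ v : ℕ → ℝ,
      (∀ j, j < n-1 → (derivative h).eval (v j) = 0) ∧
      (∀ i, i+1 < n-1 → v (i+1) < v i) ∧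
      (∀ j, j < n-1 → v j < 1) := by
  have hn' : (0:ℝ) < (n:ℝ) := by exact_mod_cast hn
  set η : ℕ → ℝ := fun j => Real.cos (j * π / n) with hηdef
  have hηanti : ∀ i j : ℕ, i < j → j ≤ n → η j < η i := by
    intro i j hij hjn
    have hjr : (j:ℝ) ≤ (n:ℝ) := by exact_mod_cast hjn
    have hir : (i:ℝ) < (j:ℝ) := by exact_mod_cast hij
    apply Real.strictAntiOn_cos
    · constructor
      · positivity
      · rw [div_le_iff₀ hn']
        nlinarith [pi_pos]
    · constructor
      · positivity
      · rw [div_le_iff₀ hn']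
        nlinarith [pi_pos]
    · rw [div_lt_div_iff₀ hn' hn']
      nlinarith [mul_pos (mul_pos (sub_pos.mpr hir) pi_pos) hn']
  have hη0 : η 0 = 1 := by rw [hηdef]; simp
  have hex : ∀ j : ℕ, ∃ w : ℝ, j < n → w ∈ Ioo (η (j+1)) (η j) ∧ h.eval w = 0 := by
    intro j
    by_cases hj : j < n
    · have hs1 := hsign j
      have hs2 := hsign (j+1)
      have hprod : h.eval (η (j+1)) * h.eval (η j) < 0 := by
        have hmul := mul_pos hs1 hs2
        have hthis : (-1:ℝ)^(j+1) = -(-1:ℝ)^j := by rw [pow_succ]; ring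
        have hpow : ((-1:ℝ)^j * h.eval (η j)) * ((-1:ℝ)^(j+1) * h.eval (η (j+1)))
            = -(h.eval (η (j+1)) * h.eval (η j)) := by
          have h2 : ((-1:ℝ)^j)^2 = 1 := by
            rcases Nat.even_or_odd j with he | ho
            · rw [he.neg_one_pow]; norm_num
            · rw [ho.neg_one_pow]; norm_num
          rw [hthis]
          linear_combination (-(h.eval (η j) * h.eval (η (j+1)))) * h2
        nlinarith [mul_pos hs1 hs2, hpow]
      obtain ⟨w, hw, hw0⟩ := root_between (hηanti j (j+1) (by omega) (by omega)) hprod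
      exact ⟨w, fun _ => ⟨hw, hw0⟩⟩
    · exact ⟨0, fun hc => absurd hc hj⟩
  choose w hw using hex
  have hrolle : ∀ j : ℕ, ∃ v : ℝ, j+1 < n → v ∈ Ioo (w (j+1)) (w j) ∧ (derivative h).eval v = 0 := by
    intro j
    by_cases hj : j+1 < n
    · have hlt : w (j+1) < w j := by
        have a1 := ((hw (j+1)) hj).1.2
        have a2 := ((hw j) (by omega)).1.1
        linarith
      obtain ⟨c, hc, hc0⟩ := exists_deriv_eq_zero hlt h.continuousOn
          (by rw [((hw (j+1)) hj).2, ((hw j) (by omega)).2])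
      refine ⟨c, fun _ => ⟨hc, ?_⟩⟩
      rwa [Polynomial.deriv] at hc0
    · exact ⟨0, fun hc => absurd hc hj⟩
  choose v hv using hrolle
  have hwlt : ∀ j, j < n → w j < 1 := by
    intro j hj
    have h1 : w j < η j := ((hw j) hj).1.2
    rcases Nat.eq_zero_or_pos j with rfl | hjpos
    · rwa [hη0] at h1
    · have : η j < η 0 := hηanti 0 j hjpos (le_of_lt hj)
      rw [hη0] at this
      linarith
  refine ⟨v, fun j hj => ((hv j) (by omega)).2, ?_, ?_⟩
  · intro i hi
    have a1 := ((hv (i+1)) (by omega)).1.2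
    have a2 := ((hv i) (by omega)).1.1
    linarith
  · intro j hj
    have a1 := ((hv j) (by omega)).1.2
    exact lt_trans a1 (hwlt j (by omega))

lemma markov2_endpoint_one {n : ℕ} {q : ℝ[X]} (hd : q.natDegree ≤ n) {B : ℝ}
    (hB : ∀ x ∈ Icc (-1:ℝ) 1, |q.eval x| ≤ B) :
    (derivative (derivative q)).eval 1 ≤ ((n:ℝ)^2*((n:ℝ)^2-1)/3) * B := by
  have hB0 : 0 ≤ B := le_trans (abs_nonneg _) (hB 1 ⟨by norm_num, le_rfl⟩)
  rcases Nat.lt_or_ge n 2 with hn2 | hn2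
  · have hq1 : (derivative q).natDegree = 0 := by
      have := Polynomial.natDegree_derivative_le q
      omega
    obtain ⟨a, ha⟩ := Polynomial.natDegree_eq_zero.mp hq1
    rw [← ha, derivative_C]
    interval_cases n <;> simp
  by_contra hcon
  push_neg at hcon
  set E := (derivative (derivative q)).eval 1 with hEdef
  set τ : ℝ := (n:ℝ)^2*((n:ℝ)^2-1)/3 with hτdef
  have hnr : (2:ℝ) ≤ (n:ℝ) := by exact_mod_cast hn2
  have hτpos : 0 < τ := by
    have h4 : (4:ℝ) ≤ (n:ℝ)^2 := by nlinarith [hnr]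
    rw [hτdef]
    nlinarith [h4]
  have hE : 0 < E := lt_of_le_of_lt (by positivity) hcon
  set μ := τ / E with hμdef
  have hμ0 : 0 < μ := by positivity
  have hμB : μ * B < 1 := by
    rw [hμdef, div_mul_eq_mul_div, div_lt_one hE]
    linarith [hcon]
  set h : ℝ[X] := Chebyshev.T ℝ n - C μ * q with hhdef
  have hsign : ∀ j : ℕ, 0 < (-1:ℝ)^j * h.eval (Real.cos ((j:ℝ)*π/n)) := by
    intro j
    rw [hhdef]
    simp only [eval_sub, eval_mul, eval_C, T_eval_node (by omega : 0 < n) j]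
    have habs := abs_le.mp (hB (Real.cos ((j:ℝ)*π/n))
      ⟨Real.neg_one_le_cos _, Real.cos_le_one _⟩)
    rcases Nat.even_or_odd j with he | ho
    · rw [he.neg_one_pow]
      nlinarith [mul_le_mul_of_nonneg_left habs.2 hμ0.le, hμB]
    · rw [ho.neg_one_pow]
      nlinarith [mul_le_mul_of_nonneg_left habs.1 hμ0.le, hμB]
  obtain ⟨v, hvroot, hvchain, hvlt⟩ := alt_rolle (by omega) h hsign
  have hd1pos : 0 < (derivative h).eval 1 := by
    have hd1 : (derivative h).eval 1 = (n:ℝ)^2 - μ * ((derivative q).eval 1) := by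
      rw [hhdef, derivative_sub, derivative_C_mul]
      simp [T_deriv_one n]
    have hq1 : (derivative q).eval 1 ≤ (n:ℝ)^2 * B := markov_endpoint_one hd hB
    have hmm : μ * ((derivative q).eval 1) ≤ μ * ((n:ℝ)^2 * B) :=
      mul_le_mul_of_nonneg_left hq1 hμ0.le
    rw [hd1]
    nlinarith [hmm, hμB, hnr]
  have hT2' : (derivative (derivative (Chebyshev.T ℝ n))).eval 1 = τ := by
    rw [hτdef]
    linarith [T_deriv2_one n]
  have hd2 : (derivative (derivative h)).eval 1 = 0 := by
    rw [hhdef]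
    simp only [derivative_sub, derivative_C_mul, eval_sub, eval_mul, eval_C]
    rw [hT2', ← hEdef, hμdef]
    field_simp
    ring
  have hrolle2 : ∀ j : ℕ, ∃ u : ℝ, j+1 < n-1 →
      u ∈ Ioo (v (j+1)) (v j) ∧ (derivative (derivative h)).eval u = 0 := by
    intro j
    by_cases hj : j+1 < n-1
    · have hlt : v (j+1) < v j := hvchain j hj
      obtain ⟨c, hc, hc0⟩ := exists_deriv_eq_zero hlt (derivative h).continuousOn
          (by rw [hvroot (j+1) hj, hvroot j (by omega)])
      refine ⟨c, fun _ => ⟨hc, ?_⟩⟩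
      rwa [Polynomial.deriv] at hc0
    · exact ⟨0, fun hc => absurd hc hj⟩
  choose u hu using hrolle2
  have hv0lt : v 0 < 1 := hvlt 0 (by omega)
  obtain ⟨ξ, hξmem, hξ⟩ := exists_deriv_eq_slope (fun x => (derivative h).eval x) hv0lt
      ((derivative h).continuousOn)
      (fun x _ => ((derivative h).differentiable.differentiableAt.differentiableWithinAt))
  have hξpos : 0 < (derivative (derivative h)).eval ξ := by
    rw [← Polynomial.deriv, hξ]
    have hv00 : (derivative h).eval (v 0) = 0 := hvroot 0 (by omega)
    simp only [hv00, sub_zero]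
    have : (0:ℝ) < 1 - v 0 := by linarith
    positivity
  have hne : derivative (derivative h) ≠ 0 := by
    intro hc
    rw [hc] at hξpos
    simp at hξpos
  apply hne
  have hdd : (derivative (derivative h)).natDegree ≤ n - 2 := by
    have hdegh : h.natDegree ≤ n := by
      rw [hhdef]
      exact le_trans (natDegree_sub_le _ _)
        (max_le (natDegree_T_le n) (le_trans (natDegree_C_mul_le _ _) hd))
    have l1 := Polynomial.natDegree_derivative_le h
    have l2 := Polynomial.natDegree_derivative_le (derivative h)
    omega
  refine poly_eq_zero_of_roots hdd u ?_ ?_ ?_ hd2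
  · intro i hi
    have a1 := ((hu (i+1)) (by omega)).1.2
    have a2 := ((hu i) (by omega)).1.1
    linarith
  · intro j hj
    exact ((hu j) (by omega)).2
  · intro j hj
    have a1 := ((hu j) (by omega)).1.2
    exact lt_trans a1 (hvlt j (by omega))


lemma comp_linear_facts (q : ℝ[X]) (s t : ℝ) :
    (∀ x : ℝ, (q.comp (C s * X + C t)).eval x = q.eval (s*x + t)) ∧
    (q.comp (C s * X + C t)).natDegree ≤ q.natDegree ∧
    derivative (q.comp (C s * X + C t)) = C s * (derivative q).comp (C s * X + C t) := by
  refine ⟨fun x => by simp [eval_comp], ?_, ?_⟩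
  · refine le_trans natDegree_comp_le ?_
    have h1 : (C s * X + C t : ℝ[X]).natDegree ≤ 1 := by
      refine le_trans (natDegree_add_le _ _) (max_le ?_ ?_)
      · exact le_trans (natDegree_C_mul_le _ _) (by simp)
      · simp
    nlinarith [q.natDegree.zero_le]
  · rw [derivative_comp]
    congr 1
    simp

lemma markov1_scaled {s t : ℝ} {n : ℕ} {q : ℝ[X]} (hd : q.natDegree ≤ n) {B : ℝ} {a b : ℝ}
    (hmap : ∀ x ∈ Icc (-1:ℝ) 1, s*x + t ∈ Icc a b)
    (hB : ∀ x ∈ Icc a b, |q.eval x| ≤ B) :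
    |s| * |(derivative q).eval (s + t)| ≤ (n:ℝ)^2 * B := by
  obtain ⟨heval, hdeg, hder⟩ := comp_linear_facts q s t
  set r := q.comp (C s * X + C t) with hrdef
  have hrd : r.natDegree ≤ n := le_trans hdeg hd
  have hrB : ∀ x ∈ Icc (-1:ℝ) 1, |r.eval x| ≤ B := fun x hx => by
    rw [heval x]; exact hB _ (hmap x hx)
  have he1 : (derivative r).eval 1 = s * (derivative q).eval (s + t) := by
    rw [hder]
    simp [eval_comp]
  have h1 : s * (derivative q).eval (s + t) ≤ (n:ℝ)^2 * B := by
    rw [← he1]; exact markov_endpoint_one hrd hrB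
  have hrd' : (-r).natDegree ≤ n := by rwa [natDegree_neg]
  have hrB' : ∀ x ∈ Icc (-1:ℝ) 1, |(-r).eval x| ≤ B := fun x hx => by
    rw [eval_neg, abs_neg]; exact hrB x hx
  have h2 : -(s * (derivative q).eval (s + t)) ≤ (n:ℝ)^2 * B := by
    have := markov_endpoint_one hrd' hrB'
    rwa [derivative_neg, eval_neg, he1] at this
  rw [← abs_mul]
  exact abs_le.mpr ⟨by linarith, h1⟩

lemma markov2_scaled {s t : ℝ} {n : ℕ} {q : ℝ[X]} (hd : q.natDegree ≤ n) {B : ℝ} {a b : ℝ}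
    (hmap : ∀ x ∈ Icc (-1:ℝ) 1, s*x + t ∈ Icc a b)
    (hB : ∀ x ∈ Icc a b, |q.eval x| ≤ B) :
    s^2 * |(derivative (derivative q)).eval (s + t)| ≤ ((n:ℝ)^2*((n:ℝ)^2-1)/3) * B := by
  obtain ⟨heval, hdeg, hder⟩ := comp_linear_facts q s t
  obtain ⟨heval', hdeg', hder'⟩ := comp_linear_facts (derivative q) s t
  set r := q.comp (C s * X + C t) with hrdef
  have hrd : r.natDegree ≤ n := le_trans hdeg hd
  have hrB : ∀ x ∈ Icc (-1:ℝ) 1, |r.eval x| ≤ B := fun x hx => by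
    rw [heval x]; exact hB _ (hmap x hx)
  have he2 : (derivative (derivative r)).eval 1
      = s^2 * (derivative (derivative q)).eval (s + t) := by
    rw [hder, derivative_C_mul, hder']
    simp [eval_comp]
    ring
  have h1 : s^2 * (derivative (derivative q)).eval (s + t) ≤ ((n:ℝ)^2*((n:ℝ)^2-1)/3) * B := by
    rw [← he2]; exact markov2_endpoint_one hrd hrB
  have hrd' : (-r).natDegree ≤ n := by rwa [natDegree_neg]
  have hrB' : ∀ x ∈ Icc (-1:ℝ) 1, |(-r).eval x| ≤ B := fun x hx => by
    rw [eval_neg, abs_neg]; exact hrB x hx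
  have h2 : -(s^2 * (derivative (derivative q)).eval (s + t)) ≤ ((n:ℝ)^2*((n:ℝ)^2-1)/3) * B := by
    have := markov2_endpoint_one hrd' hrB'
    rwa [derivative_neg, derivative_neg, eval_neg, he2] at this
  calc s^2 * |(derivative (derivative q)).eval (s + t)|
      = |s^2 * (derivative (derivative q)).eval (s + t)| := by
        rw [abs_mul, abs_of_nonneg (sq_nonneg s)]
    _ ≤ ((n:ℝ)^2*((n:ℝ)^2-1)/3) * B := abs_le.mpr ⟨by linarith, h1⟩

lemma markov1_endpoint {a b : ℝ} (hab : a < b) {n : ℕ} {q : ℝ[X]} (hd : q.natDegree ≤ n)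
    {B : ℝ} (hB : ∀ x ∈ Icc a b, |q.eval x| ≤ B) {e : ℝ} (he : e = a ∨ e = b) :
    |(derivative q).eval e| * (b - a) ≤ 2 * (n:ℝ)^2 * B := by
  rcases he with h | h <;> subst h
  · have hmap : ∀ x ∈ Icc (-1:ℝ) 1, ((e-b)/2)*x + (e+b)/2 ∈ Icc e b := by
      intro x hx
      obtain ⟨h1, h2⟩ := hx
      constructor <;> nlinarith
    have hthis := markov1_scaled hd hmap hB
    have he2 : (e-b)/2 + (e+b)/2 = e := by ring
    rw [he2] at hthis
    have habs : |(e-b)/2| = (b-e)/2 := by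
      rw [abs_of_nonpos (by linarith)]; ring
    rw [habs] at hthis
    nlinarith [hthis]
  · have hmap : ∀ x ∈ Icc (-1:ℝ) 1, ((e-a)/2)*x + (a+e)/2 ∈ Icc a e := by
      intro x hx
      obtain ⟨h1, h2⟩ := hx
      constructor <;> nlinarith
    have hthis := markov1_scaled hd hmap hB
    have he2 : (e-a)/2 + (a+e)/2 = e := by ring
    rw [he2] at hthis
    have habs : |(e-a)/2| = (e-a)/2 := by
      rw [abs_of_nonneg (by linarith)]
    rw [habs] at hthis
    nlinarith [hthis]

lemma markov2_endpoint {a b : ℝ} (hab : a < b) {n : ℕ} {q : ℝ[X]} (hd : q.natDegree ≤ n)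
    {B : ℝ} (hB : ∀ x ∈ Icc a b, |q.eval x| ≤ B) {e : ℝ} (he : e = a ∨ e = b) :
    |(derivative (derivative q)).eval e| * (b - a)^2 ≤ (4/3) * (n:ℝ)^2*((n:ℝ)^2-1) * B := by
  rcases he with h | h <;> subst h
  · have hmap : ∀ x ∈ Icc (-1:ℝ) 1, ((e-b)/2)*x + (e+b)/2 ∈ Icc e b := by
      intro x hx
      obtain ⟨h1, h2⟩ := hx
      constructor <;> nlinarith
    have hthis := markov2_scaled hd hmap hB
    have he2 : (e-b)/2 + (e+b)/2 = e := by ring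
    rw [he2] at hthis
    have hsq : ((e-b)/2)^2 = (b-e)^2/4 := by ring
    rw [hsq] at hthis
    nlinarith [hthis]
  · have hmap : ∀ x ∈ Icc (-1:ℝ) 1, ((e-a)/2)*x + (a+e)/2 ∈ Icc a e := by
      intro x hx
      obtain ⟨h1, h2⟩ := hx
      constructor <;> nlinarith
    have hthis := markov2_scaled hd hmap hB
    have he2 : (e-a)/2 + (a+e)/2 = e := by ring
    rw [he2] at hthis
    have hsq : ((e-a)/2)^2 = (e-a)^2/4 := by ring
    rw [hsq] at hthis
    nlinarith [hthis]


lemma even_part (p : ℝ[X]) : ∃ f : ℝ[X],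
    f.comp (X^2) = p + p.comp (-X) ∧ ∀ j : ℕ, f.coeff j = (p + p.comp (-X)).coeff (2*j) := by
  induction p using Polynomial.induction_on' with
  | add p q hp hq =>
    obtain ⟨f, hf1, hf2⟩ := hp
    obtain ⟨g, hg1, hg2⟩ := hq
    refine ⟨f + g, ?_, ?_⟩
    · rw [add_comp, hf1, hg1, add_comp]
      ring
    · intro j
      rw [coeff_add, hf2 j, hg2 j, add_comp]
      simp only [coeff_add]
      ring
  | monomial i a =>
    rcases Nat.even_or_odd i with ⟨l, hl⟩ | hodd
    · subst hl
      have hcompneg : ((monomial (l+l) a : ℝ[X])).comp (-X) = monomial (l+l) a := by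
        rw [monomial_comp]
        have : (-X : ℝ[X])^(l+l) = X^(l+l) := Even.neg_pow ⟨l, rfl⟩ X
        rw [this, C_mul_X_pow_eq_monomial]
      refine ⟨monomial l (2*a), ?_, ?_⟩
      · rw [hcompneg, monomial_comp, ← pow_mul]
        have h2 : 2 * l = l + l := by ring
        rw [h2, C_mul_X_pow_eq_monomial, two_mul, map_add (monomial (l+l)) a a]
      · intro j
        rw [hcompneg, coeff_add, coeff_monomial, coeff_monomial]
        by_cases hj : l = j
        · have h3 : l + l = 2*j := by omega
          rw [if_pos hj, if_pos h3]
          ring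
        · have h3 : ¬ (l + l = 2*j) := by omega
          simp [hj, h3]
    · refine ⟨0, ?_, ?_⟩
      · have hcompneg : ((monomial i a : ℝ[X])).comp (-X) = - monomial i a := by
          rw [monomial_comp]
          have : (-X : ℝ[X])^i = -(X^i) := Odd.neg_pow hodd X
          rw [this, mul_neg, C_mul_X_pow_eq_monomial]
        rw [hcompneg]
        simp
      · intro j
        have hcompneg : ((monomial i a : ℝ[X])).comp (-X) = - monomial i a := by
          rw [monomial_comp]
          have : (-X : ℝ[X])^i = -(X^i) := Odd.neg_pow hodd X
          rw [this, mul_neg, C_mul_X_pow_eq_monomial]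
        rw [hcompneg]
        simp


lemma markov2_central {c m : ℝ} (hm : 0 < m) {n : ℕ} {q : ℝ[X]} (hd : q.natDegree ≤ n) {B : ℝ}
    (hB : ∀ x ∈ Icc (c-m) (c+m), |q.eval x| ≤ B) :
    |(derivative (derivative q)).eval c| * m^2 ≤ (n:ℝ)^2 * B := by
  have hB0 : 0 ≤ B := le_trans (abs_nonneg _) (hB c ⟨by linarith, by linarith⟩)
  obtain ⟨he1, hd1, hder1⟩ := comp_linear_facts q 1 c
  set r := q.comp (C 1 * X + C c) with hrdef
  obtain ⟨he2, hd2, hder2⟩ := comp_linear_facts r (-1) 0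
  have hnegX : (C (-1:ℝ) * X + C 0 : ℝ[X]) = -X := by
    simp
  rw [hnegX] at he2 hd2 hder2
  set E : ℝ[X] := r + r.comp (-X) with hEdef
  obtain ⟨f, hf1, hf2⟩ := even_part r
  rw [← hEdef] at hf1 hf2
  have hrd : r.natDegree ≤ n := le_trans hd1 hd
  have hEdeg : E.natDegree ≤ n := by
    rw [hEdef]
    exact le_trans (natDegree_add_le _ _) (max_le hrd (le_trans hd2 hrd))
  have hfd : f.natDegree ≤ n / 2 := by
    rw [natDegree_le_iff_coeff_eq_zero]
    intro N hN
    rw [hf2 N]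
    apply coeff_eq_zero_of_natDegree_lt
    omega
  have hEeval : ∀ x : ℝ, E.eval x = q.eval (1*x + c) + q.eval (1*(-x) + c) := by
    intro x
    rw [hEdef]
    simp only [eval_add]
    rw [he1 x]
    congr 1
    have : (r.comp (-X)).eval x = r.eval (-x) := by simp [eval_comp]
    rw [this, he1 (-x)]
  have hfbound : ∀ u ∈ Icc (0:ℝ) (m^2), |f.eval u| ≤ 2*B := by
    intro u hu
    have hsq : Real.sqrt u ^ 2 = u := Real.sq_sqrt hu.1
    have hfe : f.eval u = E.eval (Real.sqrt u) := by
      have h := congrArg (fun P : ℝ[X] => P.eval (Real.sqrt u)) hf1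
      simp only [eval_comp, eval_pow, eval_X] at h
      rw [hsq] at h
      exact h
    have hs0 : 0 ≤ Real.sqrt u := Real.sqrt_nonneg u
    have hsm : Real.sqrt u ≤ m := by
      have := Real.sqrt_le_sqrt hu.2
      rwa [Real.sqrt_sq hm.le] at this
    rw [hfe, hEeval]
    have b1 : |q.eval (1*(Real.sqrt u) + c)| ≤ B := hB _ ⟨by linarith, by linarith⟩
    have b2 : |q.eval (1*(-(Real.sqrt u)) + c)| ≤ B := hB _ ⟨by linarith, by linarith⟩
    calc |q.eval (1*(Real.sqrt u) + c) + q.eval (1*(-(Real.sqrt u)) + c)|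
        ≤ |q.eval (1*(Real.sqrt u) + c)| + |q.eval (1*(-(Real.sqrt u)) + c)| := abs_add_le _ _
      _ ≤ 2*B := by linarith
  -- second derivative identities
  have hddr : (derivative (derivative r)).eval 0 = (derivative (derivative q)).eval c := by
    obtain ⟨he1', hd1', hder1'⟩ := comp_linear_facts (derivative q) 1 c
    rw [hder1, derivative_C_mul, hder1']
    simp [eval_comp]
  have hddE : (derivative (derivative E)).eval 0 = 2 * (derivative (derivative q)).eval c := by
    rw [hEdef]
    obtain ⟨he2', hd2', hder2'⟩ := comp_linear_facts (derivative r) (-1) 0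
    rw [hnegX] at hder2'
    simp only [derivative_add, hder2, derivative_C_mul, hder2', eval_add, eval_mul, eval_C]
    have : ((derivative (derivative r)).comp (-X)).eval 0 = (derivative (derivative r)).eval 0 := by
      simp [eval_comp]
    rw [this, hddr]
    ring
  have hddE2 : (derivative (derivative E)).eval 0 = 2 * (derivative f).eval 0 := by
    rw [← hf1]
    rw [derivative_comp]
    have hdx2 : derivative (X^2 : ℝ[X]) = C 2 * X := by
      rw [derivative_X_pow]
      norm_num
    rw [hdx2, derivative_mul, derivative_mul]
    simp [eval_comp]
  have hf0 : (derivative f).eval 0 = (derivative (derivative q)).eval c := by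
    have := hddE.symm.trans hddE2
    linarith
  have hmark := markov1_endpoint (a := 0) (b := m^2) (by positivity) hfd hfbound (Or.inl rfl)
  rw [hf0] at hmark
  have hnn : ((n/2 : ℕ):ℝ) * 2 ≤ (n:ℝ) := by
    have : (n/2 : ℕ) * 2 ≤ n := by omega
    exact_mod_cast this
  have habs0 : 0 ≤ |(derivative (derivative q)).eval c| := abs_nonneg _
  have hc0 : (0:ℝ) ≤ ((n/2:ℕ):ℝ) := by positivity
  have h4 : ((n/2:ℕ):ℝ)*2 * (((n/2:ℕ):ℝ)*2) ≤ (n:ℝ)*(n:ℝ) :=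
    mul_le_mul hnn hnn (by positivity) (by positivity)
  nlinarith [hmark, h4, mul_le_mul_of_nonneg_right h4 hB0]


set_option maxHeartbeats 1000000 in
lemma second_deriv_bound {n : ℕ} (hn : 2 ≤ n) {k : ℝ} (hkn : ((n:ℝ))^2 ≤ k)
    {q : ℝ[X]} (hd : q.natDegree ≤ n) {B : ℝ}
    (hB : ∀ x ∈ Icc (0:ℝ) k, |q.eval x| ≤ B)
    {t : ℝ} (ht : t ∈ Icc (0:ℝ) k) :
    |(derivative (derivative q)).eval t| ≤ 4 * B := by
  have hB0 : 0 ≤ B := le_trans (abs_nonneg _) (hB t ht)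
  have hn2 : (2:ℝ) ≤ (n:ℝ) := by exact_mod_cast hn
  have hk4 : (4:ℝ) ≤ k := le_trans (by nlinarith) hkn
  obtain ⟨ht0, htk⟩ := ht
  set m := min t (k - t) with hmdef
  have hmt : m ≤ t := min_le_left _ _
  have hmk : m ≤ k - t := min_le_right _ _
  have hm0 : 0 ≤ m := le_min ht0 (by linarith)
  rcases le_or_gt ((n:ℝ)/2) m with hc | hc
  · -- central case
    have hmpos : 0 < m := lt_of_lt_of_le (by linarith) hc
    have hcen := markov2_central (c := t) (m := m) hmpos hd
      (fun x hx => hB x ⟨by linarith [hx.1], by linarith [hx.2]⟩)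
    have hm2 : ((n:ℝ)/2)^2 ≤ m^2 := by nlinarith
    have hXm := mul_le_mul_of_nonneg_left hm2 (abs_nonneg ((derivative (derivative q)).eval t))
    have e1 : |(derivative (derivative q)).eval t| * (((n:ℝ)/2)^2)
        = |(derivative (derivative q)).eval t| * ((n:ℝ)^2/4) := by ring
    rw [e1] at hXm
    have hq4 : 0 < (n:ℝ)^2/4 := by positivity
    have e2 : (4*B) * ((n:ℝ)^2/4) = (n:ℝ)^2*B := by ring
    have h1 : |(derivative (derivative q)).eval t| * ((n:ℝ)^2/4)
        ≤ (4*B) * ((n:ℝ)^2/4) := by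
      rw [e2]
      linarith [hXm, hcen]
    exact (mul_le_mul_iff_of_pos_right hq4).mp h1
  · -- near one endpoint
    have hL0 : 0 < k - (n:ℝ)/2 := by nlinarith
    have harith : ((n:ℝ))^2*((n:ℝ)^2-1) ≤ 3 * (k - (n:ℝ)/2)^2 := by
      have h1 : (n:ℝ)^2 - (n:ℝ)/2 ≤ k - (n:ℝ)/2 := by linarith
      have h0 : (0:ℝ) < (n:ℝ)^2 - (n:ℝ)/2 := by nlinarith
      have h2 : ((n:ℝ)^2 - (n:ℝ)/2)^2 ≤ (k - (n:ℝ)/2)^2 := by nlinarith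
      have hn4 : (0:ℝ) ≤ (n:ℝ)^3*(2*(n:ℝ) - 3) := by
        have : (0:ℝ) ≤ (n:ℝ)^3 := by positivity
        nlinarith [this]
      nlinarith [h2, hn4, sq_nonneg (n:ℝ)]
    by_cases hside : t ≤ k - t
    · have hmt' : m = t := min_eq_left hside
      have htlt : t < k := by nlinarith
      have hmark := markov2_endpoint (a := t) (b := k) htlt hd
        (fun x hx => hB x ⟨by linarith [hx.1], hx.2⟩) (Or.inl rfl)
      have hL : k - (n:ℝ)/2 ≤ k - t := by
        rw [hmt'] at hc
        linarith
      have harith2 : ((n:ℝ))^2*((n:ℝ)^2-1) ≤ 3 * (k - t)^2 := by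
        have h2 : (k - (n:ℝ)/2)^2 ≤ (k-t)^2 := by nlinarith
        linarith
      have hfin : (4/3) * (n:ℝ)^2*((n:ℝ)^2-1) * B ≤ 4 * (k-t)^2 * B := by
        have := mul_le_mul_of_nonneg_right harith2 hB0
        linarith
      have hktpos : 0 < k - t := by linarith
      have hpos : 0 < (k-t)^2 := by positivity
      have h1 : |(derivative (derivative q)).eval t| * (k-t)^2 ≤ (4*B) * (k-t)^2 := by
        have e2 : (4*B) * (k-t)^2 = 4 * (k-t)^2 * B := by ring
        rw [e2]
        linarith [hmark, hfin]
      exact (mul_le_mul_iff_of_pos_right hpos).mp h1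
    · have hmt' : m = k - t := min_eq_right (by linarith)
      have htlt : 0 < t := by nlinarith
      have hmark := markov2_endpoint (a := 0) (b := t) htlt hd
        (fun x hx => hB x ⟨hx.1, by linarith [hx.2]⟩) (Or.inr rfl)
      have hL : k - (n:ℝ)/2 ≤ t := by
        rw [hmt'] at hc
        linarith
      have harith2 : ((n:ℝ))^2*((n:ℝ)^2-1) ≤ 3 * (t-0)^2 := by
        have h2 : (k - (n:ℝ)/2)^2 ≤ (t-0)^2 := by nlinarith
        linarith
      have hfin : (4/3) * (n:ℝ)^2*((n:ℝ)^2-1) * B ≤ 4 * (t-0)^2 * B := by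
        have := mul_le_mul_of_nonneg_right harith2 hB0
        linarith
      have hpos : 0 < (t-0)^2 := by
        have : 0 < t - 0 := by linarith
        positivity
      have h1 : |(derivative (derivative q)).eval t| * (t-0)^2 ≤ (4*B) * (t-0)^2 := by
        have e2 : (4*B) * (t-0)^2 = 4 * (t-0)^2 * B := by ring
        rw [e2]
        linarith [hmark, hfin]
      exact (mul_le_mul_iff_of_pos_right hpos).mp h1

lemma loss_bound {q : ℝ[X]} {w ζ S : ℝ} (hS0 : 0 ≤ S)
    (hdd : ∀ t ∈ Icc (min ζ w) (max ζ w), |(derivative (derivative q)).eval t| ≤ S)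
    (hw : (derivative q).eval w = 0) (hdist : |ζ - w| ≤ 1/2) :
    q.eval w - q.eval ζ ≤ S / 8 := by
  set G : ℝ[X] := C (q.eval w) - q - C (S/2) * (X - C w)^2 with hGdef
  have hGder : ∀ t : ℝ, (derivative G).eval t = -(derivative q).eval t - S*(t-w) := by
    intro t
    rw [hGdef]
    simp only [derivative_sub, derivative_C, derivative_C_mul, derivative_pow, derivative_X,
      zero_sub, sub_zero, eval_sub, eval_neg, eval_mul, eval_C, eval_pow, eval_X, eval_natCast,
      eval_add]
    ring_nf
    simp only [eval_sub, eval_mul, eval_C, eval_X, eval_pow, eval_natCast, eval_one]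
    ring
  have hGeval : ∀ t : ℝ, G.eval t = q.eval w - q.eval t - S*(t-w)^2/2 := by
    intro t
    rw [hGdef]
    simp
    ring
  have hGw : G.eval w = 0 := by rw [hGeval]; ring
  have hsq : (ζ - w)^2 ≤ 1/4 := by
    have hh := abs_le.mp hdist
    nlinarith [hh.1, hh.2]
  have main : G.eval ζ ≤ 0 := by
    rcases lt_trichotomy ζ w with hlt | heq | hgt
    · have hmin : min ζ w = ζ := min_eq_left hlt.le
      have hmax : max ζ w = w := max_eq_right hlt.le
      have hmono : MonotoneOn (fun x => G.eval x) (Icc ζ w) := by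
        apply monotoneOn_of_deriv_nonneg (convex_Icc ζ w) G.continuousOn
        · intro x hx
          exact (G.differentiable.differentiableAt).differentiableWithinAt
        · intro x hx
          rw [interior_Icc] at hx
          obtain ⟨hx1, hx2⟩ := hx
          rw [Polynomial.deriv, hGder x]
          obtain ⟨ξ, hξmem, hξ⟩ := exists_deriv_eq_slope (fun y => (derivative q).eval y) hx2
            ((derivative q).continuousOn)
            (fun y _ => ((derivative q).differentiable.differentiableAt.differentiableWithinAt))
          rw [Polynomial.deriv] at hξ
          rw [eq_div_iff (sub_ne_zero.mpr (ne_of_gt hx2))] at hξ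
          rw [hw] at hξ
          have hqx : (derivative q).eval x
              = -((derivative (derivative q)).eval ξ * (w - x)) := by linarith [hξ]
          have hbd : |(derivative (derivative q)).eval ξ| ≤ S := by
            apply hdd
            rw [hmin, hmax]
            exact ⟨by linarith [hξmem.1], by linarith [hξmem.2]⟩
          have habs := abs_le.mp hbd
          rw [hqx]
          have hprod : 0 ≤ (w - x) * ((derivative (derivative q)).eval ξ + S) :=
            mul_nonneg (by linarith) (by linarith [habs.1])
          nlinarith [hprod]
      have hfin := hmono (left_mem_Icc.mpr hlt.le) (right_mem_Icc.mpr hlt.le) hlt.le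
      simpa [hGw] using hfin
    · rw [heq, hGw]
    · have hmin : min ζ w = w := min_eq_right hgt.le
      have hmax : max ζ w = ζ := max_eq_left hgt.le
      have hanti : AntitoneOn (fun x => G.eval x) (Icc w ζ) := by
        apply antitoneOn_of_deriv_nonpos (convex_Icc w ζ) G.continuousOn
        · intro x hx
          exact (G.differentiable.differentiableAt).differentiableWithinAt
        · intro x hx
          rw [interior_Icc] at hx
          obtain ⟨hx1, hx2⟩ := hx
          rw [Polynomial.deriv, hGder x]
          obtain ⟨ξ, hξmem, hξ⟩ := exists_deriv_eq_slope (fun y => (derivative q).eval y) hx1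
            ((derivative q).continuousOn)
            (fun y _ => ((derivative q).differentiable.differentiableAt.differentiableWithinAt))
          rw [Polynomial.deriv] at hξ
          rw [eq_div_iff (sub_ne_zero.mpr (ne_of_gt hx1))] at hξ
          rw [hw] at hξ
          have hqx : (derivative q).eval x
              = (derivative (derivative q)).eval ξ * (x - w) := by linarith [hξ]
          have hbd : |(derivative (derivative q)).eval ξ| ≤ S := by
            apply hdd
            rw [hmin, hmax]
            exact ⟨by linarith [hξmem.1], by linarith [hξmem.2]⟩
          have habs := abs_le.mp hbd
          rw [hqx]
          have hprod : 0 ≤ (x - w) * ((derivative (derivative q)).eval ξ + S) :=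
            mul_nonneg (by linarith) (by linarith [habs.1])
          nlinarith [hprod]
      have hfin := hanti (left_mem_Icc.mpr hgt.le) (right_mem_Icc.mpr hgt.le) hgt.le
      simpa [hGw] using hfin
  rw [hGeval] at main
  nlinarith [main, hsq, hS0]


lemma grid_mono {M : ℕ} {z : ℕ → ℝ} (hmono : ∀ i, 1 ≤ i → i < M → z i < z (i+1)) :
    ∀ a b, 1 ≤ a → a ≤ b → b ≤ M → z a ≤ z b := by
  intro a b ha
  induction b with
  | zero => intro h1 h2; omega
  | succ b ih =>
    intro hab hbM
    rcases Nat.eq_or_lt_of_le hab with heq | hlt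
    · exact le_of_eq (congrArg z heq)
    · have h1 : z a ≤ z b := ih (by omega) (by omega)
      have h2 : z b < z (b+1) := hmono b (by omega) (by omega)
      linarith

lemma grid_bracket {M : ℕ} {z : ℕ → ℝ} (hM2 : 2 ≤ M)
    (hmono : ∀ i, 1 ≤ i → i < M → z i < z (i+1)) {w k : ℝ}
    (hz1 : z 1 = 0) (hzM : z M = k) (hw0 : 0 ≤ w) (hwk : w ≤ k) :
    ∃ i, 1 ≤ i ∧ i < M ∧ z i ≤ w ∧ w ≤ z (i+1) := by
  by_cases hwk' : w = k
  · refine ⟨M-1, by omega, by omega, ?_, ?_⟩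
    · have h := grid_mono hmono (M-1) M (by omega) (by omega) le_rfl
      rw [hzM] at h
      rw [hwk']
      exact h
    · have hM1 : M - 1 + 1 = M := by omega
      rw [hM1, hzM, hwk']
  · classical
    set s := (Finset.Icc 1 M).filter (fun j => z j ≤ w) with hsdef
    have h1s : (1:ℕ) ∈ s := by
      rw [hsdef, Finset.mem_filter, Finset.mem_Icc]
      refine ⟨⟨le_rfl, by omega⟩, ?_⟩
      rw [hz1]
      exact hw0
    have hne : s.Nonempty := ⟨1, h1s⟩
    set i := s.max' hne with hidef
    have his : i ∈ s := s.max'_mem hne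
    rw [hsdef, Finset.mem_filter, Finset.mem_Icc] at his
    have hiM : i < M := by
      rcases Nat.eq_or_lt_of_le his.1.2 with heq | hlt
      · exfalso
        have h2 := his.2
        rw [heq, hzM] at h2
        exact hwk' (le_antisymm hwk h2)
      · exact hlt
    refine ⟨i, his.1.1, hiM, his.2, ?_⟩
    by_contra hcon
    push_neg at hcon
    have hmem : i + 1 ∈ s := by
      rw [hsdef, Finset.mem_filter, Finset.mem_Icc]
      exact ⟨⟨by omega, by omega⟩, le_of_lt hcon⟩
    have hle := s.le_max' _ hmem
    rw [← hidef] at hle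
    omega

lemma key_max {n : ℕ} (hn : 2 ≤ n) {k : ℝ} (hkn : ((n:ℝ))^2 ≤ k)
    {q : ℝ[X]} (hd : q.natDegree ≤ n)
    {M : ℕ} (hM2 : 2 ≤ M) {z : ℕ → ℝ} (hz1 : z 1 = 0) (hzM : z M = k)
    (hmono : ∀ i : ℕ, 1 ≤ i → i < M → z i < z (i + 1))
    (hgap : ∀ i : ℕ, 1 ≤ i → i < M → z (i + 1) - z i ≤ 1)
    {c B : ℝ} (hB : ∀ x ∈ Icc (0:ℝ) k, |q.eval x - c| ≤ B)
    {w : ℝ} (hw : w ∈ Icc (0:ℝ) k) (hmax : IsMaxOn (fun x => q.eval x) (Icc 0 k) w) :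
    ∃ i ∈ Finset.Icc 1 M, q.eval w - q.eval (z i) ≤ B / 2 ∧ 0 ≤ q.eval w - q.eval (z i) := by
  have hB0 : 0 ≤ B := le_trans (abs_nonneg _) (hB w hw)
  have hn2 : (2:ℝ) ≤ (n:ℝ) := by exact_mod_cast hn
  have hk0 : (0:ℝ) < k := lt_of_lt_of_le (by nlinarith) hkn
  obtain ⟨hw0, hwk⟩ := hw
  have hzmem : ∀ i, 1 ≤ i → i ≤ M → z i ∈ Icc (0:ℝ) k := by
    intro i h1 h2
    constructor
    · rw [← hz1]
      exact grid_mono hmono 1 i le_rfl h1 h2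
    · rw [← hzM]
      exact grid_mono hmono i M h1 h2 le_rfl
  by_cases hwe : w = 0 ∨ w = k
  · rcases hwe with h | h
    · refine ⟨1, Finset.mem_Icc.mpr ⟨le_rfl, by omega⟩, ?_, ?_⟩ <;>
        rw [hz1, ← h] <;> simp <;> linarith
    · refine ⟨M, Finset.mem_Icc.mpr ⟨by omega, le_rfl⟩, ?_, ?_⟩ <;>
        rw [hzM, ← h] <;> simp <;> linarith
  · push_neg at hwe
    have hw0' : 0 < w := lt_of_le_of_ne hw0 (Ne.symm hwe.1)
    have hwk' : w < k := lt_of_le_of_ne hwk hwe.2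
    have hloc : IsLocalMax (fun x => q.eval x) w := hmax.isLocalMax (Icc_mem_nhds hw0' hwk')
    have hderw : (derivative q).eval w = 0 := by
      have hdz := hloc.deriv_eq_zero
      rwa [Polynomial.deriv] at hdz
    have hloss : ∀ ζ : ℝ, ζ ∈ Icc (0:ℝ) k → |ζ - w| ≤ 1/2 →
        q.eval w - q.eval ζ ≤ B/2 := by
      intro ζ hζmem hζd
      have hq' : derivative (q - C c) = derivative q := by
        rw [derivative_sub, derivative_C, sub_zero]
      have hdc : (q - C c).natDegree ≤ n :=
        le_trans (natDegree_sub_le _ _)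
          (max_le hd (by rw [natDegree_C]; exact Nat.zero_le n))
      have hdd : ∀ t ∈ Icc (min ζ w) (max ζ w),
          |(derivative (derivative q)).eval t| ≤ 4*B := by
        intro t ht
        have htmem : t ∈ Icc (0:ℝ) k := by
          constructor
          · have hmn : (0:ℝ) ≤ min ζ w := le_min hζmem.1 hw0
            linarith [ht.1]
          · have hmx : max ζ w ≤ k := max_le hζmem.2 hwk
            linarith [ht.2]
        have hsd := second_deriv_bound hn hkn hdc
          (fun x hx => by rw [eval_sub, eval_C]; exact hB x hx) htmem
        have he : derivative (derivative (q - C c)) = derivative (derivative q) := by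
          rw [hq']
        rwa [he] at hsd
      have hl := loss_bound (by linarith : (0:ℝ) ≤ 4*B) hdd hderw hζd
      calc q.eval w - q.eval ζ ≤ (4*B)/8 := hl
        _ = B/2 := by ring
    obtain ⟨i, hi1, hiM, hzi, hzi1⟩ := grid_bracket hM2 hmono hz1 hzM hw0 hwk
    have hgapi := hgap i hi1 hiM
    have hzimem := hzmem i hi1 (by omega)
    have hzi1mem := hzmem (i+1) (by omega) (by omega)
    rcases le_or_gt (w - z i) (1/2) with hhalf | hhalf
    · refine ⟨i, Finset.mem_Icc.mpr ⟨hi1, by omega⟩, ?_, ?_⟩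
      · apply hloss (z i) hzimem
        rw [abs_le]
        constructor <;> linarith
      · have := (isMaxOn_iff.mp hmax) (z i) hzimem
        linarith [this]
    · refine ⟨i+1, Finset.mem_Icc.mpr ⟨by omega, by omega⟩, ?_, ?_⟩
      · apply hloss (z (i+1)) hzi1mem
        rw [abs_le]
        constructor <;> linarith
      · have := (isMaxOn_iff.mp hmax) (z (i+1)) hzi1mem
        linarith [this]

end EZaux

/-- Ehlich–Zeller / Rivlin–Cheney type bound for arbitrary points with gaps at
most 1: if `deg p ≤ √k`, the points `0 = z₁ < ⋯ < z_M = k` have consecutive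
gaps at most 1, and the variation of `p` on `[0,k]` is at least `H`, then the
variation of `p` on the points `z_i` is at least `H/2`. -/
theorem discrete_vs_continuous_range (p : Polynomial ℝ) (k : ℝ) (hk : 0 ≤ k)
    (hdeg : (p.natDegree : ℝ) ≤ Real.sqrt k)
    (M : ℕ) (hM : 1 ≤ M) (z : ℕ → ℝ)
    (hz1 : z 1 = 0) (hzM : z M = k)
    (hmono : ∀ i : ℕ, 1 ≤ i → i < M → z i < z (i + 1))
    (hgap : ∀ i : ℕ, 1 ≤ i → i < M → z (i + 1) - z i ≤ 1)
    (H : ℝ)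
    (hmax : ∃ x ∈ Set.Icc 0 k, ∃ y ∈ Set.Icc 0 k, |p.eval x - p.eval y| ≥ H) :
    ∃ i ∈ Finset.Icc 1 M, ∃ j ∈ Finset.Icc 1 M,
      |p.eval (z i) - p.eval (z j)| ≥ H / 2 := by
  classical
  open Polynomial Set in
  obtain ⟨x, hx, y, hy, hxy⟩ := hmax
  have h1M : (1:ℕ) ∈ Finset.Icc 1 M := Finset.mem_Icc.mpr ⟨le_rfl, hM⟩
  by_cases hH : H ≤ 0
  · refine ⟨1, h1M, 1, h1M, ?_⟩
    rw [sub_self, abs_zero]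
    linarith
  push_neg at hH
  set n := p.natDegree with hndef
  have hkn : ((n:ℝ))^2 ≤ k := by
    have h1 : (n:ℝ) ≤ Real.sqrt k := hdeg
    nlinarith [Real.sq_sqrt hk, Real.sqrt_nonneg k, h1, (by positivity : (0:ℝ) ≤ (n:ℝ))]
  rcases Nat.lt_or_ge n 2 with hn2 | hn2
  · -- affine case
    obtain ⟨a, b, hab⟩ := Polynomial.exists_eq_X_add_C_of_natDegree_le_one
      (p := p) (by omega)
    have hMM : (M:ℕ) ∈ Finset.Icc 1 M := Finset.mem_Icc.mpr ⟨hM, le_rfl⟩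
    refine ⟨1, h1M, M, hMM, ?_⟩
    rw [hz1, hzM, hab]
    simp only [eval_add, eval_mul, eval_C, eval_X]
    have hxk : |x - y| ≤ k := by
      rw [abs_le]
      obtain ⟨hx1, hx2⟩ := hx
      obtain ⟨hy1, hy2⟩ := hy
      constructor <;> linarith
    have hcomp : |a * x + b - (a * y + b)| = |a| * |x - y| := by
      rw [show a*x + b - (a*y+b) = a*(x-y) by ring, abs_mul]
    rw [hab] at hxy
    simp only [eval_add, eval_mul, eval_C, eval_X] at hxy
    rw [hcomp] at hxy
    have hak : H ≤ |a| * k := by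
      have := mul_le_mul_of_nonneg_left hxk (abs_nonneg a)
      linarith [hxy]
    have hgoal : |a * 0 + b - (a * k + b)| = |a| * k := by
      rw [show a*0 + b - (a*k+b) = -(a*k) by ring, abs_neg, abs_mul, abs_of_nonneg hk]
    rw [hgoal]
    linarith
  · -- main case
    have hk4 : (4:ℝ) ≤ k := by
      have hn2' : (2:ℝ) ≤ (n:ℝ) := by exact_mod_cast hn2
      nlinarith [hkn]
    have hM2 : 2 ≤ M := by
      by_contra hc
      have hM1 : M = 1 := by omega
      rw [hM1, hz1] at hzM
      linarith
    have hne : (Set.Icc (0:ℝ) k).Nonempty := Set.nonempty_Icc.mpr hk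
    obtain ⟨wp, hwpmem, hwp⟩ := isCompact_Icc.exists_isMaxOn hne p.continuousOn
    obtain ⟨wm, hwmmem, hwm⟩ := isCompact_Icc.exists_isMinOn hne p.continuousOn
    set mx := p.eval wp with hmxdef
    set mn := p.eval wm with hmndef
    set c := (mx + mn)/2 with hcdef
    set B := (mx - mn)/2 with hBdef
    have hmaxmin : ∀ u ∈ Set.Icc (0:ℝ) k, mn ≤ p.eval u ∧ p.eval u ≤ mx :=
      fun u hu => ⟨(isMinOn_iff.mp hwm) u hu, (isMaxOn_iff.mp hwp) u hu⟩
    have hB : ∀ u ∈ Set.Icc (0:ℝ) k, |p.eval u - c| ≤ B := by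
      intro u hu
      obtain ⟨h1, h2⟩ := hmaxmin u hu
      rw [abs_le]
      constructor <;> [skip; skip] <;> rw [hcdef, hBdef] <;> linarith
    have hHV : H ≤ 2*B := by
      obtain ⟨hx1, hx2⟩ := hmaxmin x hx
      obtain ⟨hy1, hy2⟩ := hmaxmin y hy
      have habs : |p.eval x - p.eval y| ≤ mx - mn := by
        rw [abs_le]
        constructor <;> linarith
      rw [hBdef]
      linarith [hxy]
    obtain ⟨i, hiI, hi1, hi2⟩ := EZaux.key_max hn2 hkn (le_refl n) hM2 hz1 hzM
      hmono hgap hB hwpmem hwp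
    have hdneg : (-p).natDegree ≤ n := by rw [Polynomial.natDegree_neg]
    have hBneg : ∀ u ∈ Set.Icc (0:ℝ) k, |(-p).eval u - (-c)| ≤ B := by
      intro u hu
      rw [Polynomial.eval_neg, show -(p.eval u) - (-c) = -(p.eval u - c) by ring, abs_neg]
      exact hB u hu
    have hmaxneg : IsMaxOn (fun x => (-p).eval x) (Set.Icc 0 k) wm := by
      rw [isMaxOn_iff]
      intro u hu
      simp only [Polynomial.eval_neg, neg_le_neg_iff]
      exact (isMinOn_iff.mp hwm) u hu
    obtain ⟨j, hjI, hj1, hj2⟩ := EZaux.key_max hn2 hkn hdneg hM2 hz1 hzM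
      hmono hgap hBneg hwmmem hmaxneg
    refine ⟨i, hiI, j, hjI, ?_⟩
    rw [Polynomial.eval_neg, Polynomial.eval_neg] at hj1 hj2
    have hfinal : H/2 ≤ p.eval (z i) - p.eval (z j) := by
      have hBeq : B = (p.eval wp - p.eval wm)/2 := hBdef
      linarith [hi1, hj1, hHV, hBeq]
    exact le_trans hfinal (le_abs_self _)
end

section
/- Let c > 2 be a real constant, w a positive real, and d₁ a positive integer with c·d₁³ ≤ w/2 (so that x_{i,j} := c i² j² / (w·|i-j|·(i+j)) ≤ 1/2 for all distinct i,j ∈ {1,...,d₁}). Then for all i ∈ {1,...,d₁}: Σ_{j=1, j≠i}^{d₁} j²/(|j-i|·(j+i)) ≤ 2d₁ + 2√2·i·ln(i+1). -/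
private lemma sqrt_two_gt' : (1.414:ℝ) < Real.sqrt 2 := by
  have h := Real.sq_sqrt (show (0:ℝ) ≤ 2 by norm_num)
  nlinarith [Real.sqrt_nonneg 2]

private lemma one_le_log_three' : (1:ℝ) ≤ Real.log 3 := by
  rw [Real.le_log_iff_exp_le (by norm_num)]
  exact (Real.exp_one_lt_d9.trans (by norm_num)).le

private lemma log_two_lb : (0.6931:ℝ) ≤ Real.log 2 := by
  linarith [Real.log_two_gt_d9]

private lemma harm_le' (n : ℕ) :
    ∑ k ∈ Finset.Icc 1 n, (1:ℝ)/k ≤ Real.sqrt 2 * Real.log ((n:ℝ)+2) := by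
  induction n with
  | zero =>
    rw [show Finset.Icc 1 0 = ∅ from rfl, Finset.sum_empty]
    exact mul_nonneg (Real.sqrt_nonneg 2) (Real.log_pos (by norm_num)).le
  | succ n ih =>
    rw [Finset.sum_Icc_succ_top (by omega)]
    rcases n with _|_|_|_|n
    · norm_num
      nlinarith [sqrt_two_gt', one_le_log_three']
    · norm_num [show Finset.Icc 1 1 = {1} from rfl]
      rw [show (4:ℝ) = 2^2 by norm_num, Real.log_pow]
      push_cast
      nlinarith [sqrt_two_gt', log_two_lb]
    · norm_num [show Finset.Icc 1 2 = {1,2} from rfl]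
      have h4 : Real.log 4 ≤ Real.log 5 := Real.log_le_log (by norm_num) (by norm_num)
      rw [show (4:ℝ) = 2^2 by norm_num, Real.log_pow] at h4
      push_cast at h4
      nlinarith [sqrt_two_gt', log_two_lb]
    · norm_num [show Finset.Icc 1 3 = {1,2,3} from rfl]
      rw [show (6:ℝ) = 2*3 by norm_num, Real.log_mul (by norm_num) (by norm_num)]
      nlinarith [sqrt_two_gt', log_two_lb, one_le_log_three']
    · -- inductive step, n' = n + 4
      set m : ℝ := (n:ℝ) + 4 with hm
      have hn : (4:ℝ) ≤ m := by rw [hm]; linarith [Nat.cast_nonneg (α := ℝ) n]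
      have hcast : ((n+4:ℕ):ℝ) = m := by push_cast [hm]; ring
      have hcast2 : ((n+4+1:ℕ):ℝ) = m + 1 := by push_cast [hm]; ring
      rw [hcast2]
      have hd : Real.log (m+3) - Real.log (m+2) ≥ 1/(m+3) := by
        have h := Real.log_le_sub_one_of_pos (show (0:ℝ) < (m+2)/(m+3) by positivity)
        rw [Real.log_div (by positivity) (by positivity)] at h
        have h2 : (m+2)/(m+3) - 1 = -(1/(m+3)) := by
          field_simp
          norm_num
        linarith [h2 ▸ h]
      have hstep : 1/(m+1) ≤ Real.sqrt 2 * (Real.log (m+3) - Real.log (m+2)) := by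
        have h1 : (1.414:ℝ) * (1/(m+3)) ≤ Real.sqrt 2 * (Real.log (m+3) - Real.log (m+2)) :=
          mul_le_mul sqrt_two_gt'.le le_rfl (by positivity) (Real.sqrt_nonneg 2) |>.trans
            (mul_le_mul le_rfl hd (by positivity) (Real.sqrt_nonneg 2))
        have h2 : 1/(m+1) ≤ (1.414:ℝ) * (1/(m+3)) := by
          rw [mul_one_div, div_le_div_iff₀ (by linarith) (by linarith)]
          linarith
        linarith
      rw [hcast] at ih
      rw [show (m+1)+2 = m+3 by ring]
      linarith

set_option maxHeartbeats 1000000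

/-- Harmonic-type bound: if `c > 2`, `c d₁³ ≤ w/2`, then for each
`i ∈ {1,…,d₁}`, `∑_{j ≠ i} j²/(|j-i|(j+i)) ≤ 2 d₁ + 2√2 · i · ln(i+1)`. -/
theorem harmonic_sum_bound (c w : ℝ) (hc : 2 < c) (hw : 0 < w)
    (d₁ : ℕ) (hd : 0 < d₁) (hcd : c * (d₁ : ℝ) ^ 3 ≤ w / 2)
    (i : ℕ) (hi1 : 1 ≤ i) (hi2 : i ≤ d₁) :
    ∑ j ∈ Finset.Icc 1 d₁ \ {i},
        (j : ℝ) ^ 2 / (|(j : ℝ) - (i : ℝ)| * ((j : ℝ) + (i : ℝ)))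
      ≤ 2 * (d₁ : ℝ) + 2 * Real.sqrt 2 * (i : ℝ) * Real.log ((i : ℝ) + 1) := by
  have hiR : (1:ℝ) ≤ (i:ℝ) := by exact_mod_cast hi1
  set S : Finset ℕ := Finset.Icc 1 d₁ \ {i} with hSdef
  have hmemS : ∀ j ∈ S, 1 ≤ j ∧ j ≤ d₁ ∧ j ≠ i := by
    intro j hj
    simp only [hSdef, Finset.mem_sdiff, Finset.mem_Icc, Finset.mem_singleton] at hj
    exact ⟨hj.1.1, hj.1.2, hj.2⟩
  set H : ℝ := ∑ k ∈ Finset.Icc 1 (i-1), (1:ℝ)/k with hHdef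
  have hH0 : 0 ≤ H := Finset.sum_nonneg (fun k _ => by positivity)
  have hHle : H ≤ Real.sqrt 2 * Real.log ((i:ℝ)+1) := by
    have h := harm_le' (i-1)
    have hcast : ((i-1:ℕ):ℝ) + 2 = (i:ℝ) + 1 := by
      push_cast [Nat.cast_sub hi1]; ring
    rwa [hcast] at h
  rw [← Finset.sum_filter_add_sum_filter_not S (fun j => j^2 ≤ 2*i^2)]
  -- far part: each term ≤ 2
  have hfar : ∑ j ∈ S.filter (fun j => ¬ j^2 ≤ 2*i^2),
      (j : ℝ) ^ 2 / (|(j : ℝ) - (i : ℝ)| * ((j : ℝ) + (i : ℝ))) ≤ 2 * (d₁:ℝ) := by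
    have hcard : (S.filter (fun j => ¬ j^2 ≤ 2*i^2)).card ≤ d₁ := by
      calc (S.filter (fun j => ¬ j^2 ≤ 2*i^2)).card ≤ S.card := Finset.card_filter_le _ _
        _ ≤ (Finset.Icc 1 d₁).card := Finset.card_le_card Finset.sdiff_subset
        _ = d₁ := by rw [Nat.card_Icc]; omega
    calc ∑ j ∈ S.filter (fun j => ¬ j^2 ≤ 2*i^2),
          (j : ℝ) ^ 2 / (|(j : ℝ) - (i : ℝ)| * ((j : ℝ) + (i : ℝ)))
        ≤ ∑ _j ∈ S.filter (fun j => ¬ j^2 ≤ 2*i^2), (2:ℝ) := by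
          apply Finset.sum_le_sum
          intro j hj
          rw [Finset.mem_filter] at hj
          obtain ⟨hj1, hjd, hji⟩ := hmemS j hj.1
          have hlt : 2*i^2 < j^2 := by omega
          have hijn : i < j := by nlinarith
          have hij : (i:ℝ) < (j:ℝ) := by exact_mod_cast hijn
          have h2 : 2*(i:ℝ)^2 < (j:ℝ)^2 := by exact_mod_cast hlt
          rw [abs_of_pos (by linarith : (0:ℝ) < (j:ℝ) - i)]
          rw [div_le_iff₀ (mul_pos (by linarith) (by linarith))]
          nlinarith
        _ = 2 * (S.filter (fun j => ¬ j^2 ≤ 2*i^2)).card := by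
          rw [Finset.sum_const]; ring
        _ ≤ 2 * (d₁:ℝ) := by
          have h := (Nat.cast_le (α := ℝ)).mpr hcard
          linarith
  set A : Finset ℕ := S.filter (fun j => j^2 ≤ 2*i^2) with hAdef
  have hnear : ∑ j ∈ A,
      (j : ℝ) ^ 2 / (|(j : ℝ) - (i : ℝ)| * ((j : ℝ) + (i : ℝ)))
      ≤ 2 * Real.sqrt 2 * (i:ℝ) * Real.log ((i:ℝ)+1) := by
    rw [← Finset.sum_filter_add_sum_filter_not A (fun j => j < i)]
    have hbelow : ∑ j ∈ A.filter (fun j => j < i),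
        (j : ℝ) ^ 2 / (|(j : ℝ) - (i : ℝ)| * ((j : ℝ) + (i : ℝ))) ≤ (i:ℝ) * H := by
      have hstep1 : ∑ j ∈ A.filter (fun j => j < i),
          (j : ℝ) ^ 2 / (|(j : ℝ) - (i : ℝ)| * ((j : ℝ) + (i : ℝ)))
          ≤ ∑ j ∈ A.filter (fun j => j < i), (i:ℝ) * (1/((i-j:ℕ):ℝ)) := by
        apply Finset.sum_le_sum
        intro j hj
        rw [Finset.mem_filter] at hj
        obtain ⟨hj1, hjd, hji⟩ := hmemS j (Finset.mem_filter.mp hj.1).1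
        have hji' : j < i := hj.2
        have hijR : (j:ℝ) < (i:ℝ) := by exact_mod_cast hji'
        have hj1R : (1:ℝ) ≤ (j:ℝ) := by exact_mod_cast hj1
        have hcast : ((i-j:ℕ):ℝ) = (i:ℝ) - (j:ℝ) := by
          push_cast [Nat.cast_sub hji'.le]; ring
        rw [hcast, abs_of_neg (by linarith : (j:ℝ) - i < 0)]
        rw [show -((j:ℝ)-i) = (i:ℝ)-j by ring, mul_one_div]
        rw [div_le_div_iff₀ (mul_pos (by linarith) (by linarith)) (by linarith)]
        have hin : (j:ℝ)^2 ≤ (i:ℝ)*((j:ℝ)+(i:ℝ)) := by nlinarith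
        nlinarith [mul_le_mul_of_nonneg_right hin
          (show (0:ℝ) ≤ (i:ℝ)-(j:ℝ) by linarith)]
      have hstep2 : ∑ j ∈ A.filter (fun j => j < i), (1/((i-j:ℕ):ℝ)) ≤ H := by
        have himg : ∑ k ∈ (A.filter (fun j => j < i)).image (fun j => i - j), (1:ℝ)/(k:ℝ)
            = ∑ j ∈ A.filter (fun j => j < i), (1:ℝ)/((i-j:ℕ):ℝ) := by
          apply Finset.sum_image
          intro a ha b hb hab
          rw [Finset.mem_coe, Finset.mem_filter] at ha hb
          have hab' : i - a = i - b := hab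
          omega
        rw [← himg]
        apply Finset.sum_le_sum_of_subset_of_nonneg
        · intro k hk
          rw [Finset.mem_image] at hk
          obtain ⟨j, hj, rfl⟩ := hk
          rw [Finset.mem_filter] at hj
          obtain ⟨hj1, hjd, hji⟩ := hmemS j (Finset.mem_filter.mp hj.1).1
          have hji' : j < i := hj.2
          rw [Finset.mem_Icc]
          omega
        · intro k _ _
          positivity
      calc ∑ j ∈ A.filter (fun j => j < i),
            (j : ℝ) ^ 2 / (|(j : ℝ) - (i : ℝ)| * ((j : ℝ) + (i : ℝ)))
          ≤ ∑ j ∈ A.filter (fun j => j < i), (i:ℝ) * (1/((i-j:ℕ):ℝ)) := hstep1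
        _ = (i:ℝ) * ∑ j ∈ A.filter (fun j => j < i), (1/((i-j:ℕ):ℝ)) := by
            rw [Finset.mul_sum]
        _ ≤ (i:ℝ) * H := mul_le_mul_of_nonneg_left hstep2 (by linarith)
    have habove : ∑ j ∈ A.filter (fun j => ¬ j < i),
        (j : ℝ) ^ 2 / (|(j : ℝ) - (i : ℝ)| * ((j : ℝ) + (i : ℝ))) ≤ (i:ℝ) * H := by
      have hstep1 : ∑ j ∈ A.filter (fun j => ¬ j < i),
          (j : ℝ) ^ 2 / (|(j : ℝ) - (i : ℝ)| * ((j : ℝ) + (i : ℝ)))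
          ≤ ∑ j ∈ A.filter (fun j => ¬ j < i), (i:ℝ) * (1/((j-i:ℕ):ℝ)) := by
        apply Finset.sum_le_sum
        intro j hj
        rw [Finset.mem_filter] at hj
        have hjA := Finset.mem_filter.mp hj.1
        obtain ⟨hj1, hjd, hji⟩ := hmemS j hjA.1
        have hji' : i < j := by omega
        have hsq : j^2 ≤ 2*i^2 := hjA.2
        have hijR : (i:ℝ) < (j:ℝ) := by exact_mod_cast hji'
        have hsqR : (j:ℝ)^2 ≤ 2*(i:ℝ)^2 := by exact_mod_cast hsq
        have hcast : ((j-i:ℕ):ℝ) = (j:ℝ) - (i:ℝ) := by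
          push_cast [Nat.cast_sub hji'.le]; ring
        rw [hcast, abs_of_pos (by linarith : (0:ℝ) < (j:ℝ) - i), mul_one_div]
        rw [div_le_div_iff₀ (mul_pos (by linarith) (by linarith)) (by linarith)]
        have hii : (i:ℝ)*(i:ℝ) ≤ (i:ℝ)*(j:ℝ) :=
          mul_le_mul_of_nonneg_left hijR.le (by linarith)
        have hin : (j:ℝ)^2 ≤ (i:ℝ)*((j:ℝ)+(i:ℝ)) := by nlinarith
        nlinarith [mul_le_mul_of_nonneg_right hin
          (show (0:ℝ) ≤ (j:ℝ)-(i:ℝ) by linarith)]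
      have hstep2 : ∑ j ∈ A.filter (fun j => ¬ j < i), (1/((j-i:ℕ):ℝ)) ≤ H := by
        have himg : ∑ k ∈ (A.filter (fun j => ¬ j < i)).image (fun j => j - i), (1:ℝ)/(k:ℝ)
            = ∑ j ∈ A.filter (fun j => ¬ j < i), (1:ℝ)/((j-i:ℕ):ℝ) := by
          apply Finset.sum_image
          intro a ha b hb hab
          rw [Finset.mem_coe, Finset.mem_filter] at ha hb
          have hab' : a - i = b - i := hab
          omega
        rw [← himg]
        apply Finset.sum_le_sum_of_subset_of_nonneg
        · intro k hk
          rw [Finset.mem_image] at hk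
          obtain ⟨j, hj, rfl⟩ := hk
          rw [Finset.mem_filter] at hj
          have hjA := hj.1
          rw [Finset.mem_filter] at hjA
          obtain ⟨hj1, hjd, hji⟩ := hmemS j hjA.1
          have hsq : j^2 ≤ 2*i^2 := hjA.2
          have hji' : i < j := by omega
          have hj2i : j < 2*i := by nlinarith
          rw [Finset.mem_Icc]
          omega
        · intro k _ _
          positivity
      calc ∑ j ∈ A.filter (fun j => ¬ j < i),
            (j : ℝ) ^ 2 / (|(j : ℝ) - (i : ℝ)| * ((j : ℝ) + (i : ℝ)))
          ≤ ∑ j ∈ A.filter (fun j => ¬ j < i), (i:ℝ) * (1/((j-i:ℕ):ℝ)) := hstep1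
        _ = (i:ℝ) * ∑ j ∈ A.filter (fun j => ¬ j < i), (1/((j-i:ℕ):ℝ)) := by
            rw [Finset.mul_sum]
        _ ≤ (i:ℝ) * H := mul_le_mul_of_nonneg_left hstep2 (by linarith)
    have hfinal : (i:ℝ) * H + (i:ℝ) * H ≤ 2 * Real.sqrt 2 * (i:ℝ) * Real.log ((i:ℝ)+1) := by
      have h := mul_le_mul_of_nonneg_left hHle (show (0:ℝ) ≤ (i:ℝ) by linarith)
      nlinarith
    linarith
  linarith
end
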